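/- arXiv:0704.2749 — 5 statements merged into one kernel-verified Lean document; each statement's English description precedes it below -/
import Mathlib

section
/- Let n > 2, let (G,f) be an n-ary groupoid, and let x ↦ x̄ be a unary operation on G. Then the following identities hold for some fixed i, j ∈ {2,…,n}: (1) f(x,…,x, x̄, x,…,x, y) = y (with i−2 copies of x before x̄ and n−i copies after), (2) f(y, x,…,x, x̄, x,…,x) = y (with n−j copies of x before x̄ and j−2 copies after), and (3) f(f(x_1,…,x_n), x_{n+1},…,x_{2n−1}) = f(x_1, f(x_2,…,x_{n+1}), x_{n+2},…,x_{2n−1}), if and only if (G,f) is an n-ary group and x̄ is the skew element of x for every x ∈ G. -/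
section NAry

variable {G : Type*}

/-- The result of substituting the "inner" application of `f` at 0-based position `i`
into the sequence `x` of `2n-1` arguments (indexed by naturals). -/
def applyAt (n : ℕ) (f : (Fin n → G) → G) (x : ℕ → G) (i : ℕ) : G :=
  f fun j => if (j : ℕ) < i then x (j : ℕ)
    else if (j : ℕ) = i then f (fun t => x (i + (t : ℕ)))
    else x ((j : ℕ) + n - 1)

/-- `(i+1,j+1)`-associativity (0-based positions `i` and `j`). -/
def IsAssocAt (n : ℕ) (f : (Fin n → G) → G) (i j : ℕ) : Prop :=
  ∀ x : ℕ → G, applyAt n f x i = applyAt n f x j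

/-- `f` is associative: all the `(i,j)`-associative laws hold. -/
def IsNAssoc (n : ℕ) (f : (Fin n → G) → G) : Prop :=
  ∀ i j : ℕ, i < n → j < n → IsAssocAt n f i j

/-- The equation `f(x₁,…,x_{i}, z, x_{i+2},…,x_n) = x₀` is uniquely solvable at the
0-based place `i`. -/
def IsUSolv (n : ℕ) (f : (Fin n → G) → G) (i : ℕ) : Prop :=
  ∀ (x : Fin n → G) (x₀ : G), ∃! z : G, f (fun m => if (m : ℕ) = i then z else x m) = x₀

/-- The equation `f(x₁,…,x_{i}, z, x_{i+2},…,x_n) = x₀` is solvable at the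
0-based place `i`. -/
def IsSolv (n : ℕ) (f : (Fin n → G) → G) (i : ℕ) : Prop :=
  ∀ (x : Fin n → G) (x₀ : G), ∃ z : G, f (fun m => if (m : ℕ) = i then z else x m) = x₀

/-- An `n`-ary group: associative and uniquely solvable at every place. -/
def IsNAryGroup (n : ℕ) (f : (Fin n → G) → G) : Prop :=
  IsNAssoc n f ∧ ∀ i : ℕ, i < n → IsUSolv n f i

/-- `bar` is the skew-element operation: `f(x,…,x, bar x) = x` (with `n-1` copies of `x`). -/
def IsSkewOf (n : ℕ) (f : (Fin n → G) → G) (bar : G → G) : Prop :=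
  ∀ x : G, f (fun m => if (m : ℕ) = n - 1 then bar x else x) = x

end NAry

namespace Dudek

variable {G : Type*}

/-- apply `f` to the first `n` entries of a ℕ-indexed sequence -/
def ap (n : ℕ) (f : (Fin n → G) → G) (x : ℕ → G) : G := f fun j => x (j : ℕ)

/-- the `2n-1`-argument expression with inner `f` at position `p` -/
def bS (n : ℕ) (f : (Fin n → G) → G) (p : ℕ) (x : ℕ → G) : ℕ → G :=
  fun m => if m < p then x m else if m = p then ap n f (fun s => x (p + s)) else x (m + n - 1)

theorem applyAt_eq (n : ℕ) (f : (Fin n → G) → G) (x : ℕ → G) (p : ℕ) :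
    applyAt n f x p = ap n f (bS n f p x) := rfl

theorem ap_congr {n : ℕ} {f : (Fin n → G) → G} {x y : ℕ → G}
    (h : ∀ m, m < n → x m = y m) : ap n f x = ap n f y :=
  congrArg f (funext fun j => h j j.isLt)

def cons (z : G) (c : ℕ → G) : ℕ → G := fun m => if m = 0 then z else c (m - 1)

def snoc (n : ℕ) (c : ℕ → G) (z : G) : ℕ → G := fun m => if m = n - 1 then z else c m

/-- right-neutral (n-1)-tuple -/
def RN (n : ℕ) (f : (Fin n → G) → G) (e : ℕ → G) : Prop := ∀ y, ap n f (cons y e) = y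

/-- left-neutral (n-1)-tuple -/
def LN (n : ℕ) (f : (Fin n → G) → G) (e : ℕ → G) : Prop := ∀ y, ap n f (snoc n e y) = y

/-- translation map at place p -/
def trv (n : ℕ) (f : (Fin n → G) → G) (p : ℕ) (X : ℕ → G) (z : G) : G :=
  ap n f (fun m => if m = p then z else X m)

structure Hyp (n : ℕ) (f : (Fin n → G) → G) (bar : G → G) (i j : ℕ) : Prop where
  hn : 2 < n
  hi2 : 2 ≤ i
  hin : i ≤ n
  hj2 : 2 ≤ j
  hjn : j ≤ n
  hA : ∀ x y : G,
    ap n f (fun m => if m = i - 2 then bar x else if m = n - 1 then y else x) = y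
  hB : ∀ x y : G,
    ap n f (fun m => if m = 0 then y else if m = n - j + 1 then bar x else x) = y
  h01 : ∀ x : ℕ → G, ap n f (bS n f 0 x) = ap n f (bS n f 1 x)

variable {n : ℕ} {f : (Fin n → G) → G} {bar : G → G} {i j : ℕ}

def Lseq (bar : G → G) (i : ℕ) (x : G) : ℕ → G := fun m => if m = i - 2 then bar x else x

def Rseq (n : ℕ) (bar : G → G) (j : ℕ) (x : G) : ℕ → G :=
  fun m => if m = n - j then bar x else x

theorem hB_RN (H : Hyp n f bar i j) (x : G) : RN n f (Rseq n bar j x) := by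
  intro y
  have e : ap n f (cons y (Rseq n bar j x)) =
      ap n f (fun m => if m = 0 then y else if m = n - j + 1 then bar x else x) := by
    apply ap_congr; intro m hm
    simp only [cons, Rseq]
    rcases Nat.eq_zero_or_pos m with h0 | h0
    · subst h0; simp
    · have hm0 : m ≠ 0 := by omega
      rw [if_neg hm0, if_neg hm0]
      by_cases h1 : m - 1 = n - j
      · have h2 : m = n - j + 1 := by omega
        rw [if_pos h1, if_pos h2]
      · have h2 : m ≠ n - j + 1 := by omega
        rw [if_neg h1, if_neg h2]
  rw [e]; exact H.hB x y

theorem hA_LN (H : Hyp n f bar i j) (x : G) : LN n f (Lseq bar i x) := by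
  have hne : i - 2 ≠ n - 1 := by have := H.hin; have := H.hn; omega
  intro y
  have e : ap n f (snoc n (Lseq bar i x) y) =
      ap n f (fun m => if m = i - 2 then bar x else if m = n - 1 then y else x) := by
    apply ap_congr; intro m hm
    simp only [snoc, Lseq]
    by_cases h1 : m = n - 1
    · rw [if_pos h1, if_neg (by omega), if_pos h1]
    · rw [if_neg h1]
      by_cases h2 : m = i - 2
      · rw [if_pos h2, if_pos h2]
      · rw [if_neg h2, if_neg h2, if_neg h1]
  rw [e]; exact H.hA x y

theorem cancR (H : Hyp n f bar i j) (u v : G)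
    (h : ∀ c : ℕ → G, ap n f (cons u c) = ap n f (cons v c)) : u = v := by
  have h1 := hB_RN H u u
  have h2 := hB_RN H u v
  rw [← h1, ← h2]
  exact h (Rseq n bar j u)

theorem assoc_consec (H : Hyp n f bar i j) :
    ∀ p, p + 1 < n → ∀ x : ℕ → G, ap n f (bS n f p x) = ap n f (bS n f (p + 1) x) := by
  have hn := H.hn
  intro p
  induction p with
  | zero => intro _ x; exact H.h01 x
  | succ p IH =>
    intro hlt x
    apply cancR H
    intro c
    set W : ℕ → G := fun m => if m < 2 * n - 2 then x (m + 1) else c 0 with hW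
    have main : ∀ r, r + 2 ≤ n →
        ap n f (cons (ap n f (bS n f (r + 1) x)) c) =
        ap n f (fun m => if m = 0 then x 0
          else if m = 1 then ap n f (bS n f r W) else c (m - 1)) := by
      intro r hr
      set Z : ℕ → G := fun m => if m < n then bS n f (r + 1) x m else c (m - n) with hZ
      have innz : ap n f (fun s => Z (0 + s)) = ap n f (bS n f (r + 1) x) := by
        apply ap_congr; intro s hs
        simp only [hZ, Nat.zero_add]
        rw [if_pos hs]
      have step1 : ap n f (cons (ap n f (bS n f (r + 1) x)) c) = ap n f (bS n f 0 Z) := by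
        apply ap_congr; intro m hm
        rcases Nat.eq_zero_or_pos m with h0 | h0
        · subst h0
          have rhs : bS n f 0 Z 0 = ap n f (fun s => Z (0 + s)) := by
            unfold bS; rw [if_neg (Nat.lt_irrefl 0), if_pos rfl]
          rw [rhs, innz]
          simp [cons]
        · have hm0 : m ≠ 0 := by omega
          have l1 : bS n f 0 Z m = Z (m + n - 1) := by
            unfold bS; rw [if_neg (by omega : ¬ m < 0), if_neg hm0]
          have l2 : Z (m + n - 1) = c (m - 1) := by
            simp only [hZ]
            rw [if_neg (by omega : ¬ m + n - 1 < n)]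
            congr 1; omega
          rw [l1, l2]
          simp only [cons, if_neg hm0]
      have innw : ap n f (fun s => Z (1 + s)) = ap n f (bS n f r W) := by
        apply ap_congr; intro s hs
        simp only [hZ, hW, bS]
        rcases Nat.lt_or_ge (1 + s) n with h2 | h2
        · rw [if_pos h2]
          rcases Nat.lt_trichotomy s r with h3 | h3 | h3
          · rw [if_pos (by omega : 1 + s < r + 1), if_pos h3,
              if_pos (by omega : s < 2 * n - 2)]
            congr 1; omega
          · rw [if_neg (by omega : ¬ 1 + s < r + 1), if_pos (by omega : 1 + s = r + 1),
              if_neg (by omega : ¬ s < r), if_pos h3]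
            apply ap_congr; intro t ht
            rw [if_pos (by omega : r + t < 2 * n - 2)]
            congr 1; omega
          · rw [if_neg (by omega : ¬ 1 + s < r + 1), if_neg (by omega : ¬ 1 + s = r + 1),
              if_neg (by omega : ¬ s < r), if_neg (by omega : ¬ s = r),
              if_pos (by omega : s + n - 1 < 2 * n - 2)]
            congr 1; omega
        · rw [if_neg (by omega : ¬ 1 + s < n)]
          rw [if_neg (by omega : ¬ s < r), if_neg (by omega : ¬ s = r),
            if_neg (by omega : ¬ s + n - 1 < 2 * n - 2)]
          congr 1; omega
      have step3 : ap n f (bS n f 1 Z) =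
          ap n f (fun m => if m = 0 then x 0
            else if m = 1 then ap n f (bS n f r W) else c (m - 1)) := by
        apply ap_congr; intro m hm
        rcases Nat.eq_zero_or_pos m with h0 | h0
        · subst h0
          have l1 : bS n f 1 Z 0 = Z 0 := by
            unfold bS; rw [if_pos (by omega : (0:ℕ) < 1)]
          have l2 : Z 0 = x 0 := by
            simp only [hZ]
            rw [if_pos (by omega : (0:ℕ) < n)]
            unfold bS
            rw [if_pos (by omega : (0:ℕ) < r + 1)]
          rw [l1, l2]
          simp
        · rcases Nat.lt_or_ge m 2 with h1 | h1
          · have hm1 : m = 1 := by omega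
            subst hm1
            have l1 : bS n f 1 Z 1 = ap n f (fun s => Z (1 + s)) := by
              unfold bS; rw [if_neg (Nat.lt_irrefl 1), if_pos rfl]
            rw [l1, innw, if_neg (by omega : (1:ℕ) ≠ 0), if_pos rfl]
          · have hm0 : m ≠ 0 := by omega
            have hm1 : m ≠ 1 := by omega
            have l1 : bS n f 1 Z m = Z (m + n - 1) := by
              unfold bS; rw [if_neg (by omega : ¬ m < 1), if_neg hm1]
            have l2 : Z (m + n - 1) = c (m - 1) := by
              simp only [hZ]
              rw [if_neg (by omega : ¬ m + n - 1 < n)]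
              congr 1; omega
            rw [l1, l2, if_neg hm0, if_neg hm1]
      rw [step1, H.h01 Z, step3]
    have e1 := main p (by omega)
    have e2 := main (p + 1) (by omega)
    rw [e1, e2]
    apply ap_congr; intro m hm
    rcases Nat.eq_zero_or_pos m with h0 | h0
    · subst h0; simp
    · by_cases h1 : m = 1
      · subst h1
        simp only [if_neg (by omega : (1:ℕ) ≠ 0), if_pos rfl]
        exact IH (by omega) W
      · simp only [if_neg (by omega : m ≠ 0), if_neg h1]

theorem rebr (H : Hyp n f bar i j) (p q : ℕ) (hp : p < n) (hq : q < n) (σ : ℕ → G) :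
    ap n f (bS n f p σ) = ap n f (bS n f q σ) := by
  have key : ∀ d a, a + d < n → ap n f (bS n f a σ) = ap n f (bS n f (a + d) σ) := by
    intro d
    induction d with
    | zero => intro a _; rfl
    | succ d IH =>
      intro a h
      rw [IH a (by omega), show a + (d + 1) = (a + d) + 1 from by omega]
      exact assoc_consec H (a + d) (by omega) σ
  rcases le_total p q with h | h
  · have e := key (q - p) p (by omega)
    rwa [show p + (q - p) = q from by omega] at e
  · have e := key (p - q) q (by omega)
    rw [show q + (p - q) = p from by omega] at e
    exact e.symm

theorem fullAssoc (H : Hyp n f bar i j) : IsNAssoc n f := by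
  intro p q hp hq x
  rw [applyAt_eq, applyAt_eq]
  exact rebr H p q hp hq x

theorem RN_LN (H : Hyp n f bar i j) (e : ℕ → G) (he : RN n f e) : LN n f e := by
  have hn := H.hn
  intro y
  set σ : ℕ → G := fun m => if m < n - 1 then Lseq bar i y m
    else if m < 2 * n - 2 then e (m - (n - 1)) else y with hσ
  have inn1 : ap n f (fun s => σ (n - 1 + s)) = ap n f (snoc n e y) := by
    apply ap_congr; intro s hs
    simp only [hσ, snoc]
    by_cases h1 : s = n - 1
    · rw [if_neg (by omega : ¬ n - 1 + s < n - 1), if_neg (by omega : ¬ n - 1 + s < 2 * n - 2),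
        if_pos h1]
    · rw [if_neg (by omega : ¬ n - 1 + s < n - 1), if_pos (by omega : n - 1 + s < 2 * n - 2),
        if_neg h1]
      congr 1; omega
  have c1 : ap n f (bS n f (n - 1) σ) = ap n f (snoc n e y) := by
    have outer : ap n f (bS n f (n - 1) σ) =
        ap n f (snoc n (Lseq bar i y) (ap n f (snoc n e y))) := by
      apply ap_congr; intro m hm
      simp only [bS, snoc]
      by_cases h1 : m = n - 1
      · rw [if_neg (by omega : ¬ m < n - 1), if_pos h1, if_pos h1]
        exact inn1
      · rw [if_pos (by omega : m < n - 1), if_neg h1]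
        simp only [hσ]
        rw [if_pos (by omega : m < n - 1)]
    rw [outer]
    exact hA_LN H y (ap n f (snoc n e y))
  have inn2 : ap n f (fun s => σ (n - 2 + s)) = Lseq bar i y (n - 2) := by
    have : ap n f (fun s => σ (n - 2 + s)) = ap n f (cons (Lseq bar i y (n - 2)) e) := by
      apply ap_congr; intro s hs
      simp only [hσ, cons]
      rcases Nat.eq_zero_or_pos s with h0 | h0
      · subst h0
        rw [if_pos (by omega : n - 2 + 0 < n - 1)]
        simp
      · rw [if_neg (by omega : ¬ n - 2 + s < n - 1), if_pos (by omega : n - 2 + s < 2 * n - 2),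
          if_neg (by omega : ¬ s = 0)]
        congr 1; omega
    rw [this]
    exact he (Lseq bar i y (n - 2))
  have c2 : ap n f (bS n f (n - 2) σ) = y := by
    have outer : ap n f (bS n f (n - 2) σ) = ap n f (snoc n (Lseq bar i y) y) := by
      apply ap_congr; intro m hm
      simp only [bS, snoc]
      by_cases h1 : m = n - 2
      · rw [if_neg (by omega : ¬ m < n - 2), if_pos h1, if_neg (by omega : ¬ m = n - 1)]
        rw [h1]; exact inn2
      · by_cases h2 : m = n - 1
        · rw [if_neg (by omega : ¬ m < n - 2), if_neg h1, if_pos h2]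
          simp only [hσ]
          rw [if_neg (by omega : ¬ m + n - 1 < n - 1), if_neg (by omega : ¬ m + n - 1 < 2 * n - 2)]
        · rw [if_pos (by omega : m < n - 2), if_neg h2]
          simp only [hσ]
          rw [if_pos (by omega : m < n - 1)]
    rw [outer]
    exact hA_LN H y y
  have := rebr H (n - 1) (n - 2) (by omega) (by omega) σ
  rw [c1, c2] at this
  exact this

theorem LN_RN (H : Hyp n f bar i j) (e : ℕ → G) (he : LN n f e) : RN n f e := by
  have hn := H.hn
  intro y
  set σ : ℕ → G := fun m => if m = 0 then y else if m < n then e (m - 1)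
    else Rseq n bar j y (m - n) with hσ
  have inn1 : ap n f (fun s => σ (1 + s)) = Rseq n bar j y 0 := by
    have : ap n f (fun s => σ (1 + s)) = ap n f (snoc n e (Rseq n bar j y 0)) := by
      apply ap_congr; intro s hs
      simp only [hσ, snoc]
      by_cases h1 : s = n - 1
      · rw [if_neg (by omega : ¬ 1 + s = 0), if_neg (by omega : ¬ 1 + s < n), if_pos h1]
        congr 1; omega
      · rw [if_neg (by omega : ¬ 1 + s = 0), if_pos (by omega : 1 + s < n), if_neg h1]
        congr 1; omega
    rw [this]
    exact he (Rseq n bar j y 0)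
  have c1 : ap n f (bS n f 1 σ) = y := by
    have outer : ap n f (bS n f 1 σ) = ap n f (cons y (Rseq n bar j y)) := by
      apply ap_congr; intro m hm
      simp only [bS, cons]
      rcases Nat.eq_zero_or_pos m with h0 | h0
      · subst h0
        rw [if_pos (by omega : (0:ℕ) < 1)]
        simp only [hσ]
        simp
      · by_cases h1 : m = 1
        · rw [if_neg (by omega : ¬ m < 1), if_pos h1, if_neg (by omega : ¬ m = 0)]
          rw [h1]; exact inn1
        · rw [if_neg (by omega : ¬ m < 1), if_neg h1, if_neg (by omega : ¬ m = 0)]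
          simp only [hσ]
          rw [if_neg (by omega : ¬ m + n - 1 = 0), if_neg (by omega : ¬ m + n - 1 < n)]
          congr 1; omega
    rw [outer]
    exact hB_RN H y y
  have inn2 : ap n f (fun s => σ (0 + s)) = ap n f (cons y e) := by
    apply ap_congr; intro s hs
    simp only [hσ, cons, Nat.zero_add]
    rcases Nat.eq_zero_or_pos s with h0 | h0
    · subst h0; simp
    · rw [if_neg (by omega : ¬ s = 0), if_pos hs, if_neg (by omega : ¬ s = 0)]
  have c2 : ap n f (bS n f 0 σ) = ap n f (cons y e) := by
    have outer : ap n f (bS n f 0 σ) = ap n f (cons (ap n f (cons y e)) (Rseq n bar j y)) := by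
      apply ap_congr; intro m hm
      simp only [bS, cons]
      rcases Nat.eq_zero_or_pos m with h0 | h0
      · subst h0
        rw [if_neg (Nat.lt_irrefl 0), if_pos rfl, if_pos rfl, inn2]
      · rw [if_neg (by omega : ¬ m < 0), if_neg (by omega : ¬ m = 0), if_neg (by omega : ¬ m = 0)]
        simp only [hσ]
        rw [if_neg (by omega : ¬ m + n - 1 = 0), if_neg (by omega : ¬ m + n - 1 < n)]
        congr 1; omega
    rw [outer]
    exact hB_RN H y (ap n f (cons y e))
  have := rebr H 0 1 (by omega) (by omega) σ
  rw [c1, c2] at this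
  exact this

theorem hB2 (H : Hyp n f bar i j) (hj : j = 2) (x y : G) :
    ap n f (fun m => if m = 0 then y else if m = n - 1 then bar x else x) = y := by
  have hn := H.hn
  have e : ap n f (fun m => if m = 0 then y else if m = n - 1 then bar x else x) =
      ap n f (fun m => if m = 0 then y else if m = n - j + 1 then bar x else x) := by
    apply ap_congr; intro m hm
    rcases Nat.eq_zero_or_pos m with h0 | h0
    · subst h0; simp
    · rw [if_neg (by omega : ¬ m = 0), if_neg (by omega : ¬ m = 0)]
      by_cases h1 : m = n - 1
      · rw [if_pos h1, if_pos (by omega : m = n - j + 1)]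
      · rw [if_neg h1, if_neg (by omega : ¬ m = n - j + 1)]
  rw [e]; exact H.hB x y

theorem hA2 (H : Hyp n f bar i j) (hi : i = 2) (x y : G) :
    ap n f (fun m => if m = 0 then bar x else if m = n - 1 then y else x) = y := by
  have hn := H.hn
  have e : ap n f (fun m => if m = 0 then bar x else if m = n - 1 then y else x) =
      ap n f (fun m => if m = i - 2 then bar x else if m = n - 1 then y else x) := by
    apply ap_congr; intro m hm
    by_cases h0 : m = 0
    · rw [if_pos h0, if_pos (by omega : m = i - 2)]
    · rw [if_neg h0, if_neg (by omega : ¬ m = i - 2)]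
  rw [e]; exact H.hA x y

/-- a right-neutral family whose last entry is the parameter -/
theorem famLastR (H : Hyp n f bar i j) :
    ∃ ρ : G → ℕ → G, (∀ x, RN n f (ρ x)) ∧ ∀ x, ρ x (n - 2) = x := by
  have hn := H.hn
  by_cases hi : i < n
  · refine ⟨Lseq bar i, fun x => LN_RN H _ (hA_LN H x), fun x => ?_⟩
    simp only [Lseq]
    rw [if_neg (by have := H.hi2; omega : ¬ n - 2 = i - 2)]
  · by_cases hj : 3 ≤ j
    · refine ⟨Rseq n bar j, fun x => hB_RN H x, fun x => ?_⟩
      simp only [Rseq]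
      rw [if_neg (by have := H.hjn; omega : ¬ n - 2 = n - j)]
    · have hj2 : j = 2 := by have := H.hj2; omega
      refine ⟨fun x m => if m = 0 then bar x else x, fun x => ?_, fun x => ?_⟩
      · intro y
        set σ : ℕ → G := fun m => if m = 0 then y else if m = 1 then bar x
          else if m < n then x else if m < 2 * n - 2 then bar x else bar (bar x) with hσ
        have c0 : ap n f (bS n f 0 σ) =
            ap n f (cons y (fun m => if m = 0 then bar x else x)) := by
          have inn : ap n f (fun s => σ (0 + s)) =
              ap n f (cons y (fun m => if m = 0 then bar x else x)) := by
            apply ap_congr; intro s hs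
            simp only [hσ, cons, Nat.zero_add]
            rcases Nat.eq_zero_or_pos s with h0 | h0
            · subst h0; simp
            · rw [if_neg (by omega : ¬ s = 0), if_neg (by omega : ¬ s = 0)]
              by_cases h1 : s = 1
              · rw [if_pos h1, if_pos (by omega : s - 1 = 0)]
              · rw [if_neg h1, if_pos hs, if_neg (by omega : ¬ s - 1 = 0)]
          have outer : ap n f (bS n f 0 σ) =
              ap n f (fun m => if m = 0
                then ap n f (cons y (fun m => if m = 0 then bar x else x))
                else if m = n - 1 then bar (bar x) else bar x) := by
            apply ap_congr; intro m hm
            simp only [bS]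
            rcases Nat.eq_zero_or_pos m with h0 | h0
            · subst h0
              rw [if_neg (Nat.lt_irrefl 0), if_pos rfl, if_pos rfl]
              exact inn
            · rw [if_neg (by omega : ¬ m < 0), if_neg (by omega : ¬ m = 0),
                if_neg (by omega : ¬ m = 0)]
              simp only [hσ]
              rw [if_neg (by omega : ¬ m + n - 1 = 0), if_neg (by omega : ¬ m + n - 1 = 1),
                if_neg (by omega : ¬ m + n - 1 < n)]
              by_cases h1 : m = n - 1
              · rw [if_neg (by omega : ¬ m + n - 1 < 2 * n - 2), if_pos h1]
              · rw [if_pos (by omega : m + n - 1 < 2 * n - 2), if_neg h1]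
          rw [outer]
          exact hB2 H hj2 (bar x) _
        have c1 : ap n f (bS n f 1 σ) = y := by
          have inn : ap n f (fun s => σ (1 + s)) = bar x := by
            have e : ap n f (fun s => σ (1 + s)) =
                ap n f (fun m => if m = 0 then bar x else if m = n - 1 then bar x else x) := by
              apply ap_congr; intro s hs
              simp only [hσ]
              rcases Nat.eq_zero_or_pos s with h0 | h0
              · subst h0; simp
              · rw [if_neg (by omega : ¬ 1 + s = 0), if_neg (by omega : ¬ s = 0)]
                by_cases h1 : s = n - 1
                · rw [if_neg (by omega : ¬ 1 + s = 1), if_neg (by omega : ¬ 1 + s < n),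
                    if_pos (by omega : 1 + s < 2 * n - 2), if_pos h1]
                · rw [if_neg (by omega : ¬ 1 + s = 1), if_pos (by omega : 1 + s < n),
                    if_neg h1]
            rw [e]
            exact hB2 H hj2 x (bar x)
          have outer : ap n f (bS n f 1 σ) =
              ap n f (fun m => if m = 0 then y
                else if m = n - 1 then bar (bar x) else bar x) := by
            apply ap_congr; intro m hm
            simp only [bS]
            rcases Nat.eq_zero_or_pos m with h0 | h0
            · subst h0
              rw [if_pos (by omega : (0:ℕ) < 1), if_pos rfl]
              simp only [hσ]; simp
            · by_cases h1 : m = 1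
              · rw [if_neg (by omega : ¬ m < 1), if_pos h1, if_neg (by omega : ¬ m = 0),
                  if_neg (by omega : ¬ m = n - 1)]
                exact inn
              · rw [if_neg (by omega : ¬ m < 1), if_neg h1, if_neg (by omega : ¬ m = 0)]
                simp only [hσ]
                rw [if_neg (by omega : ¬ m + n - 1 = 0), if_neg (by omega : ¬ m + n - 1 = 1),
                  if_neg (by omega : ¬ m + n - 1 < n)]
                by_cases h2 : m = n - 1
                · rw [if_neg (by omega : ¬ m + n - 1 < 2 * n - 2), if_pos h2]
                · rw [if_pos (by omega : m + n - 1 < 2 * n - 2), if_neg h2]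
          rw [outer]
          exact hB2 H hj2 (bar x) y
        have := rebr H 0 1 (by omega) (by omega) σ
        rw [c0, c1] at this
        exact this
      · exact if_neg (by omega : ¬ n - 2 = 0)

/-- a left-neutral family whose first entry is the parameter -/
theorem famFirstL (H : Hyp n f bar i j) :
    ∃ lam : G → ℕ → G, (∀ x, LN n f (lam x)) ∧ ∀ x, lam x 0 = x := by
  have hn := H.hn
  by_cases hi : 3 ≤ i
  · refine ⟨Lseq bar i, fun x => hA_LN H x, fun x => ?_⟩
    simp only [Lseq]
    rw [if_neg (by omega : ¬ (0:ℕ) = i - 2)]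
  · have hi2 : i = 2 := by have := H.hi2; omega
    by_cases hj : j < n
    · refine ⟨Rseq n bar j, fun x => RN_LN H _ (hB_RN H x), fun x => ?_⟩
      simp only [Rseq]
      rw [if_neg (by omega : ¬ (0:ℕ) = n - j)]
    · refine ⟨fun x m => if m = n - 2 then bar x else x, fun x => ?_, fun x => ?_⟩
      · intro y
        set σ : ℕ → G := fun m => if m = 0 then bar (bar x) else if m < n - 1 then bar x
          else if m < 2 * n - 3 then x else if m = 2 * n - 3 then bar x else y with hσ
        have cb : ap n f (bS n f (n - 1) σ) =
            ap n f (snoc n (fun m => if m = n - 2 then bar x else x) y) := by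
          have inn : ap n f (fun s => σ (n - 1 + s)) =
              ap n f (snoc n (fun m => if m = n - 2 then bar x else x) y) := by
            apply ap_congr; intro s hs
            simp only [hσ, snoc]
            by_cases h1 : s = n - 1
            · rw [if_neg (by omega : ¬ n - 1 + s = 0), if_neg (by omega : ¬ n - 1 + s < n - 1),
                if_neg (by omega : ¬ n - 1 + s < 2 * n - 3),
                if_neg (by omega : ¬ n - 1 + s = 2 * n - 3), if_pos h1]
            · rw [if_neg h1]
              by_cases h2 : s = n - 2
              · rw [if_neg (by omega : ¬ n - 1 + s = 0), if_neg (by omega : ¬ n - 1 + s < n - 1),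
                  if_neg (by omega : ¬ n - 1 + s < 2 * n - 3),
                  if_pos (by omega : n - 1 + s = 2 * n - 3), if_pos h2]
              · rw [if_neg (by omega : ¬ n - 1 + s = 0), if_neg (by omega : ¬ n - 1 + s < n - 1),
                  if_pos (by omega : n - 1 + s < 2 * n - 3), if_neg h2]
          have outer : ap n f (bS n f (n - 1) σ) =
              ap n f (fun m => if m = 0 then bar (bar x) else if m = n - 1
                then ap n f (snoc n (fun m => if m = n - 2 then bar x else x) y)
                else bar x) := by
            apply ap_congr; intro m hm
            simp only [bS]
            by_cases h1 : m = n - 1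
            · rw [if_neg (by omega : ¬ m < n - 1), if_pos h1, if_neg (by omega : ¬ m = 0),
                if_pos h1]
              exact inn
            · rw [if_pos (by omega : m < n - 1)]
              simp only [hσ]
              rcases Nat.eq_zero_or_pos m with h0 | h0
              · subst h0; simp
              · rw [if_neg (by omega : ¬ m = 0), if_pos (by omega : m < n - 1),
                  if_neg (by omega : ¬ m = 0), if_neg h1]
          rw [outer]
          exact hA2 H hi2 (bar x) _
        have cb2 : ap n f (bS n f (n - 2) σ) = y := by
          have inn : ap n f (fun s => σ (n - 2 + s)) = bar x := by
            have e : ap n f (fun s => σ (n - 2 + s)) =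
                ap n f (fun m => if m = 0 then bar x else if m = n - 1 then bar x else x) := by
              apply ap_congr; intro s hs
              simp only [hσ]
              rcases Nat.eq_zero_or_pos s with h0 | h0
              · subst h0
                rw [if_neg (by omega : ¬ n - 2 + 0 = 0), if_pos (by omega : n - 2 + 0 < n - 1)]
                simp
              · by_cases h1 : s = n - 1
                · rw [if_neg (by omega : ¬ n - 2 + s = 0), if_neg (by omega : ¬ n - 2 + s < n - 1),
                    if_neg (by omega : ¬ n - 2 + s < 2 * n - 3),
                    if_pos (by omega : n - 2 + s = 2 * n - 3),
                    if_neg (by omega : ¬ s = 0), if_pos h1]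
                · rw [if_neg (by omega : ¬ n - 2 + s = 0), if_neg (by omega : ¬ n - 2 + s < n - 1),
                    if_pos (by omega : n - 2 + s < 2 * n - 3),
                    if_neg (by omega : ¬ s = 0), if_neg h1]
            rw [e]
            exact hA2 H hi2 x (bar x)
          have outer : ap n f (bS n f (n - 2) σ) =
              ap n f (fun m => if m = 0 then bar (bar x)
                else if m = n - 1 then y else bar x) := by
            apply ap_congr; intro m hm
            simp only [bS]
            by_cases h1 : m = n - 2
            · rw [if_neg (by omega : ¬ m < n - 2), if_pos h1, if_neg (by omega : ¬ m = 0),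
                if_neg (by omega : ¬ m = n - 1)]
              exact inn
            · by_cases h2 : m = n - 1
              · rw [if_neg (by omega : ¬ m < n - 2), if_neg h1, if_neg (by omega : ¬ m = 0),
                  if_pos h2]
                simp only [hσ]
                rw [if_neg (by omega : ¬ m + n - 1 = 0), if_neg (by omega : ¬ m + n - 1 < n - 1),
                  if_neg (by omega : ¬ m + n - 1 < 2 * n - 3),
                  if_neg (by omega : ¬ m + n - 1 = 2 * n - 3)]
              · rw [if_pos (by omega : m < n - 2), if_neg h2]
                simp only [hσ]
                rcases Nat.eq_zero_or_pos m with h0 | h0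
                · subst h0; simp
                · rw [if_neg (by omega : ¬ m = 0), if_pos (by omega : m < n - 1),
                    if_neg (by omega : ¬ m = 0)]
          rw [outer]
          exact hA2 H hi2 (bar x) y
        have := rebr H (n - 1) (n - 2) (by omega) (by omega) σ
        rw [cb, cb2] at this
        exact this
      · exact if_neg (by omega : ¬ (0:ℕ) = n - 2)

theorem lastSurj (H : Hyp n f bar i j) (c : ℕ → G) (b : G) :
    ∃ z, ap n f (snoc n c z) = b := by
  have hn := H.hn
  obtain ⟨lam, hlam, hlam0⟩ := famFirstL H
  set x₀ : G := ap n f (snoc n c (c 0)) with hx₀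
  set z : G := ap n f (fun m => if m = 0 then c 0 else if m = n - 1 then b else lam x₀ m)
    with hz
  refine ⟨z, ?_⟩
  set σ : ℕ → G := fun m => if m < n - 1 then c m else if m = n - 1 then c 0
    else if m < 2 * n - 2 then lam x₀ (m - (n - 1)) else b with hσ
  have inn1 : ap n f (fun s => σ (n - 1 + s)) = z := by
    rw [hz]
    apply ap_congr; intro s hs
    simp only [hσ]
    rcases Nat.eq_zero_or_pos s with h0 | h0
    · subst h0
      rw [if_neg (by omega : ¬ n - 1 + 0 < n - 1), if_pos (by omega : n - 1 + 0 = n - 1)]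
      simp
    · by_cases h1 : s = n - 1
      · rw [if_neg (by omega : ¬ n - 1 + s < n - 1), if_neg (by omega : ¬ n - 1 + s = n - 1),
          if_neg (by omega : ¬ n - 1 + s < 2 * n - 2), if_neg (by omega : ¬ s = 0), if_pos h1]
      · rw [if_neg (by omega : ¬ n - 1 + s < n - 1), if_neg (by omega : ¬ n - 1 + s = n - 1),
          if_pos (by omega : n - 1 + s < 2 * n - 2), if_neg (by omega : ¬ s = 0), if_neg h1]
        congr 1; omega
  have c1 : ap n f (bS n f (n - 1) σ) = ap n f (snoc n c z) := by
    apply ap_congr; intro m hm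
    simp only [bS, snoc]
    by_cases h1 : m = n - 1
    · rw [if_neg (by omega : ¬ m < n - 1), if_pos h1, if_pos h1]
      exact inn1
    · rw [if_pos (by omega : m < n - 1), if_neg h1]
      simp only [hσ]
      rw [if_pos (by omega : m < n - 1)]
  have inn2 : ap n f (fun s => σ (0 + s)) = x₀ := by
    rw [hx₀]
    apply ap_congr; intro s hs
    simp only [hσ, snoc, Nat.zero_add]
    by_cases h1 : s = n - 1
    · rw [if_neg (by omega : ¬ s < n - 1), if_pos h1, if_pos h1]
    · rw [if_pos (by omega : s < n - 1), if_neg h1]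
  have c2 : ap n f (bS n f 0 σ) = b := by
    have outer : ap n f (bS n f 0 σ) = ap n f (snoc n (lam x₀) b) := by
      apply ap_congr; intro m hm
      simp only [bS, snoc]
      rcases Nat.eq_zero_or_pos m with h0 | h0
      · subst h0
        rw [if_neg (Nat.lt_irrefl 0), if_pos rfl, if_neg (by omega : ¬ (0:ℕ) = n - 1), inn2]
        exact (hlam0 x₀).symm
      · rw [if_neg (by omega : ¬ m < 0), if_neg (by omega : ¬ m = 0)]
        simp only [hσ]
        by_cases h1 : m = n - 1
        · rw [if_neg (by omega : ¬ m + n - 1 < n - 1), if_neg (by omega : ¬ m + n - 1 = n - 1),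
            if_neg (by omega : ¬ m + n - 1 < 2 * n - 2), if_pos h1]
        · rw [if_neg (by omega : ¬ m + n - 1 < n - 1), if_neg (by omega : ¬ m + n - 1 = n - 1),
            if_pos (by omega : m + n - 1 < 2 * n - 2), if_neg h1]
          congr 1; omega
    rw [outer]
    exact hlam x₀ b
  have := rebr H (n - 1) 0 (by omega) (by omega) σ
  rw [c1, c2] at this
  exact this

theorem firstSurj (H : Hyp n f bar i j) (c : ℕ → G) (b : G) :
    ∃ z, ap n f (cons z c) = b := by
  have hn := H.hn
  obtain ⟨ρ, hρ, hρl⟩ := famLastR H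
  set x₀ : G := ap n f (cons (c 0) c) with hx₀
  set z : G := ap n f (fun m => if m = 0 then b else if m = n - 1 then c 0 else ρ x₀ (m - 1))
    with hz
  refine ⟨z, ?_⟩
  set σ : ℕ → G := fun m => if m = 0 then b else if m < n - 1 then ρ x₀ (m - 1)
    else if m = n - 1 then c 0 else c (m - n) with hσ
  have inn1 : ap n f (fun s => σ (0 + s)) = z := by
    rw [hz]
    apply ap_congr; intro s hs
    simp only [hσ, Nat.zero_add]
    rcases Nat.eq_zero_or_pos s with h0 | h0
    · subst h0; simp
    · by_cases h1 : s = n - 1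
      · rw [if_neg (by omega : ¬ s = 0), if_neg (by omega : ¬ s < n - 1), if_pos h1,
          if_neg (by omega : ¬ s = 0), if_pos h1]
      · rw [if_neg (by omega : ¬ s = 0), if_pos (by omega : s < n - 1),
          if_neg (by omega : ¬ s = 0), if_neg h1]
  have c1 : ap n f (bS n f 0 σ) = ap n f (cons z c) := by
    apply ap_congr; intro m hm
    simp only [bS, cons]
    rcases Nat.eq_zero_or_pos m with h0 | h0
    · subst h0
      rw [if_neg (Nat.lt_irrefl 0), if_pos rfl, if_pos rfl]
      exact inn1
    · rw [if_neg (by omega : ¬ m < 0), if_neg (by omega : ¬ m = 0), if_neg (by omega : ¬ m = 0)]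
      simp only [hσ]
      rw [if_neg (by omega : ¬ m + n - 1 = 0), if_neg (by omega : ¬ m + n - 1 < n - 1),
        if_neg (by omega : ¬ m + n - 1 = n - 1)]
      congr 1; omega
  have inn2 : ap n f (fun s => σ (n - 1 + s)) = x₀ := by
    rw [hx₀]
    apply ap_congr; intro s hs
    simp only [hσ, cons]
    rcases Nat.eq_zero_or_pos s with h0 | h0
    · subst h0
      rw [if_neg (by omega : ¬ n - 1 + 0 = 0), if_neg (by omega : ¬ n - 1 + 0 < n - 1),
        if_pos (by omega : n - 1 + 0 = n - 1)]
      simp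
    · rw [if_neg (by omega : ¬ n - 1 + s = 0), if_neg (by omega : ¬ n - 1 + s < n - 1),
        if_neg (by omega : ¬ n - 1 + s = n - 1), if_neg (by omega : ¬ s = 0)]
      congr 1; omega
  have c2 : ap n f (bS n f (n - 1) σ) = b := by
    have outer : ap n f (bS n f (n - 1) σ) = ap n f (cons b (ρ x₀)) := by
      apply ap_congr; intro m hm
      simp only [bS, cons]
      by_cases h1 : m = n - 1
      · rw [if_neg (by omega : ¬ m < n - 1), if_pos h1, if_neg (by omega : ¬ m = 0), inn2]
        rw [show m - 1 = n - 2 from by omega]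
        exact (hρl x₀).symm
      · rw [if_pos (by omega : m < n - 1)]
        simp only [hσ]
        rcases Nat.eq_zero_or_pos m with h0 | h0
        · subst h0; simp
        · rw [if_neg (by omega : ¬ m = 0), if_pos (by omega : m < n - 1),
            if_neg (by omega : ¬ m = 0)]
    rw [outer]
    exact hρ x₀ b
  have := rebr H (n - 1) 0 (by omega) (by omega) σ
  rw [c2] at this
  rw [c1] at this
  exact this.symm

/-- right-neutral tuple with prescribed tail -/
theorem rnStar (H : Hyp n f bar i j) (t : ℕ → G) :
    ∃ w, RN n f (cons w t) := by
  have hn := H.hn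
  obtain ⟨ρ, hρ, hρl⟩ := famLastR H
  set x : G := ap n f (fun m => if m < 2 then t 0 else t (m - 2)) with hx
  set w : G := ap n f (fun m => if m ≤ n - 3 then ρ x m else t 0) with hw
  refine ⟨w, fun y => ?_⟩
  set σ : ℕ → G := fun m => if m = 0 then y else if m ≤ n - 2 then ρ x (m - 1)
    else if m ≤ n then t 0 else t (m - n - 1) with hσ
  have inn1 : ap n f (fun s => σ (1 + s)) = w := by
    rw [hw]
    apply ap_congr; intro s hs
    simp only [hσ]
    by_cases h1 : s ≤ n - 3
    · rw [if_neg (by omega : ¬ 1 + s = 0), if_pos (by omega : 1 + s ≤ n - 2), if_pos h1]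
      congr 1; omega
    · rw [if_neg (by omega : ¬ 1 + s = 0), if_neg (by omega : ¬ 1 + s ≤ n - 2),
        if_pos (by omega : 1 + s ≤ n), if_neg h1]
  have c1 : ap n f (bS n f 1 σ) = ap n f (cons y (cons w t)) := by
    apply ap_congr; intro m hm
    simp only [bS, cons]
    rcases Nat.eq_zero_or_pos m with h0 | h0
    · subst h0
      rw [if_pos (by omega : (0:ℕ) < 1), if_pos rfl]
      simp only [hσ]; simp
    · by_cases h1 : m = 1
      · rw [if_neg (by omega : ¬ m < 1), if_pos h1, if_neg (by omega : ¬ m = 0),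
          if_pos (by omega : m - 1 = 0)]
        exact inn1
      · rw [if_neg (by omega : ¬ m < 1), if_neg h1, if_neg (by omega : ¬ m = 0),
          if_neg (by omega : ¬ m - 1 = 0)]
        simp only [hσ]
        rw [if_neg (by omega : ¬ m + n - 1 = 0), if_neg (by omega : ¬ m + n - 1 ≤ n - 2),
          if_neg (by omega : ¬ m + n - 1 ≤ n)]
        congr 1; omega
  have inn2 : ap n f (fun s => σ (n - 1 + s)) = x := by
    rw [hx]
    apply ap_congr; intro s hs
    simp only [hσ]
    by_cases h1 : s < 2
    · rw [if_neg (by omega : ¬ n - 1 + s = 0), if_neg (by omega : ¬ n - 1 + s ≤ n - 2),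
        if_pos (by omega : n - 1 + s ≤ n), if_pos h1]
    · rw [if_neg (by omega : ¬ n - 1 + s = 0), if_neg (by omega : ¬ n - 1 + s ≤ n - 2),
        if_neg (by omega : ¬ n - 1 + s ≤ n), if_neg h1]
      congr 1; omega
  have c2 : ap n f (bS n f (n - 1) σ) = y := by
    have outer : ap n f (bS n f (n - 1) σ) = ap n f (cons y (ρ x)) := by
      apply ap_congr; intro m hm
      simp only [bS, cons]
      by_cases h1 : m = n - 1
      · rw [if_neg (by omega : ¬ m < n - 1), if_pos h1, if_neg (by omega : ¬ m = 0), inn2]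
        rw [show m - 1 = n - 2 from by omega]
        exact (hρl x).symm
      · rw [if_pos (by omega : m < n - 1)]
        simp only [hσ]
        rcases Nat.eq_zero_or_pos m with h0 | h0
        · subst h0; simp
        · rw [if_neg (by omega : ¬ m = 0), if_pos (by omega : m ≤ n - 2),
            if_neg (by omega : ¬ m = 0)]
    rw [outer]
    exact hρ x y
  have := rebr H 1 (n - 1) (by omega) (by omega) σ
  rw [c1, c2] at this
  exact this

/-- right-neutral tuple with prescribed first n-2 entries -/
theorem rnLast (H : Hyp n f bar i j) (t : ℕ → G) :
    ∃ w, RN n f (fun m => if m = n - 2 then w else t m) := by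
  have hn := H.hn
  obtain ⟨W, hW⟩ := rnStar H (fun _ => t 0)
  obtain ⟨w₁, hw₁⟩ := lastSurj H (fun m => if m ≤ n - 3 then t m else t 0) W
  set w : G := ap n f (fun m => if m = 1 then w₁ else t 0) with hw
  refine ⟨w, fun y => ?_⟩
  set σ : ℕ → G := fun m => if m = 0 then y else if m ≤ n - 2 then t (m - 1)
    else if m = n - 1 then t 0 else if m = n then w₁ else t 0 with hσ
  have inn1 : ap n f (fun s => σ (n - 1 + s)) = w := by
    rw [hw]
    apply ap_congr; intro s hs
    simp only [hσ]
    rcases Nat.eq_zero_or_pos s with h0 | h0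
    · subst h0
      rw [if_neg (by omega : ¬ n - 1 + 0 = 0), if_neg (by omega : ¬ n - 1 + 0 ≤ n - 2),
        if_pos (by omega : n - 1 + 0 = n - 1), if_neg (by omega : ¬ (0:ℕ) = 1)]
    · by_cases h1 : s = 1
      · rw [if_neg (by omega : ¬ n - 1 + s = 0), if_neg (by omega : ¬ n - 1 + s ≤ n - 2),
          if_neg (by omega : ¬ n - 1 + s = n - 1), if_pos (by omega : n - 1 + s = n),
          if_pos h1]
      · rw [if_neg (by omega : ¬ n - 1 + s = 0), if_neg (by omega : ¬ n - 1 + s ≤ n - 2),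
          if_neg (by omega : ¬ n - 1 + s = n - 1), if_neg (by omega : ¬ n - 1 + s = n),
          if_neg h1]
  have c1 : ap n f (bS n f (n - 1) σ) =
      ap n f (cons y (fun m => if m = n - 2 then w else t m)) := by
    apply ap_congr; intro m hm
    simp only [bS, cons]
    by_cases h1 : m = n - 1
    · rw [if_neg (by omega : ¬ m < n - 1), if_pos h1, if_neg (by omega : ¬ m = 0),
        if_pos (by omega : m - 1 = n - 2)]
      exact inn1
    · rw [if_pos (by omega : m < n - 1)]
      simp only [hσ]
      rcases Nat.eq_zero_or_pos m with h0 | h0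
      · subst h0; simp
      · rw [if_neg (by omega : ¬ m = 0), if_pos (by omega : m ≤ n - 2),
          if_neg (by omega : ¬ m = 0), if_neg (by omega : ¬ m - 1 = n - 2)]
  have inn2 : ap n f (fun s => σ (1 + s)) = W := by
    rw [← hw₁]
    apply ap_congr; intro s hs
    simp only [hσ, snoc]
    by_cases h1 : s = n - 1
    · rw [if_neg (by omega : ¬ 1 + s = 0), if_neg (by omega : ¬ 1 + s ≤ n - 2),
        if_neg (by omega : ¬ 1 + s = n - 1), if_pos (by omega : 1 + s = n), if_pos h1]
    · by_cases h2 : s ≤ n - 3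
      · rw [if_neg (by omega : ¬ 1 + s = 0), if_pos (by omega : 1 + s ≤ n - 2), if_neg h1,
          if_pos h2]
        congr 1; omega
      · rw [if_neg (by omega : ¬ 1 + s = 0), if_neg (by omega : ¬ 1 + s ≤ n - 2),
          if_pos (by omega : 1 + s = n - 1), if_neg h1, if_neg h2]
  have c2 : ap n f (bS n f 1 σ) = y := by
    have outer : ap n f (bS n f 1 σ) = ap n f (cons y (cons W (fun _ => t 0))) := by
      apply ap_congr; intro m hm
      simp only [bS, cons]
      rcases Nat.eq_zero_or_pos m with h0 | h0
      · subst h0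
        rw [if_pos (by omega : (0:ℕ) < 1), if_pos rfl]
        simp only [hσ]; simp
      · by_cases h1 : m = 1
        · rw [if_neg (by omega : ¬ m < 1), if_pos h1, if_neg (by omega : ¬ m = 0),
            if_pos (by omega : m - 1 = 0)]
          exact inn2
        · rw [if_neg (by omega : ¬ m < 1), if_neg h1, if_neg (by omega : ¬ m = 0),
            if_neg (by omega : ¬ m - 1 = 0)]
          simp only [hσ]
          rw [if_neg (by omega : ¬ m + n - 1 = 0), if_neg (by omega : ¬ m + n - 1 ≤ n - 2),
            if_neg (by omega : ¬ m + n - 1 = n - 1), if_neg (by omega : ¬ m + n - 1 = n)]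
    rw [outer]
    exact hW y
  have := rebr H (n - 1) 1 (by omega) (by omega) σ
  rw [c1, c2] at this
  exact this

theorem uniq0 (H : Hyp n f bar i j) (c : ℕ → G) (z z' : G)
    (h : ap n f (cons z c) = ap n f (cons z' c)) : z = z' := by
  have hn := H.hn
  obtain ⟨w, hw⟩ := rnStar H (fun _ => c 0)
  obtain ⟨d₁, hd₁⟩ := lastSurj H c w
  have key : ∀ z : G,
      z = ap n f (cons (ap n f (cons z c)) (fun m => if m = 0 then d₁ else c 0)) := by
    intro z
    set σ : ℕ → G := fun m => if m = 0 then z else if m < n then c (m - 1)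
      else if m = n then d₁ else c 0 with hσ
    have inn0 : ap n f (fun s => σ (0 + s)) = ap n f (cons z c) := by
      apply ap_congr; intro s hs
      simp only [hσ, cons, Nat.zero_add]
      rcases Nat.eq_zero_or_pos s with h0 | h0
      · subst h0; simp
      · rw [if_neg (by omega : ¬ s = 0), if_pos hs, if_neg (by omega : ¬ s = 0)]
    have c0 : ap n f (bS n f 0 σ) =
        ap n f (cons (ap n f (cons z c)) (fun m => if m = 0 then d₁ else c 0)) := by
      apply ap_congr; intro m hm
      simp only [bS, cons]
      rcases Nat.eq_zero_or_pos m with h0 | h0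
      · subst h0
        rw [if_neg (Nat.lt_irrefl 0), if_pos rfl, if_pos rfl]
        exact inn0
      · rw [if_neg (by omega : ¬ m < 0), if_neg (by omega : ¬ m = 0),
          if_neg (by omega : ¬ m = 0)]
        simp only [hσ]
        by_cases h1 : m = 1
        · rw [if_neg (by omega : ¬ m + n - 1 = 0), if_neg (by omega : ¬ m + n - 1 < n),
            if_pos (by omega : m + n - 1 = n), if_pos (by omega : m - 1 = 0)]
        · rw [if_neg (by omega : ¬ m + n - 1 = 0), if_neg (by omega : ¬ m + n - 1 < n),
            if_neg (by omega : ¬ m + n - 1 = n), if_neg (by omega : ¬ m - 1 = 0)]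
    have inn1 : ap n f (fun s => σ (1 + s)) = w := by
      rw [← hd₁]
      apply ap_congr; intro s hs
      simp only [hσ, snoc]
      by_cases h1 : s = n - 1
      · rw [if_neg (by omega : ¬ 1 + s = 0), if_neg (by omega : ¬ 1 + s < n),
          if_pos (by omega : 1 + s = n), if_pos h1]
      · rw [if_neg (by omega : ¬ 1 + s = 0), if_pos (by omega : 1 + s < n), if_neg h1]
        congr 1; omega
    have c1 : ap n f (bS n f 1 σ) = z := by
      have outer : ap n f (bS n f 1 σ) =
          ap n f (cons z (cons w (fun _ => c 0))) := by
        apply ap_congr; intro m hm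
        simp only [bS, cons]
        rcases Nat.eq_zero_or_pos m with h0 | h0
        · subst h0
          rw [if_pos (by omega : (0:ℕ) < 1), if_pos rfl]
          simp only [hσ]; simp
        · by_cases h1 : m = 1
          · rw [if_neg (by omega : ¬ m < 1), if_pos h1, if_neg (by omega : ¬ m = 0),
              if_pos (by omega : m - 1 = 0)]
            exact inn1
          · rw [if_neg (by omega : ¬ m < 1), if_neg h1, if_neg (by omega : ¬ m = 0),
              if_neg (by omega : ¬ m - 1 = 0)]
            simp only [hσ]
            rw [if_neg (by omega : ¬ m + n - 1 = 0), if_neg (by omega : ¬ m + n - 1 < n),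
              if_neg (by omega : ¬ m + n - 1 = n)]
      rw [outer]
      exact hw z
    have := rebr H 0 1 (by omega) (by omega) σ
    rw [c0, c1] at this
    exact this.symm
  rw [key z, key z', h]

theorem uniqLast (H : Hyp n f bar i j) (c : ℕ → G) (z z' : G)
    (h : ap n f (snoc n c z) = ap n f (snoc n c z')) : z = z' := by
  have hn := H.hn
  obtain ⟨w, hw0⟩ := rnStar H (fun m => c (m + 1))
  have hwL := RN_LN H _ hw0
  obtain ⟨d₁, hd₁⟩ := firstSurj H (fun _ => c 0) w
  have key : ∀ z : G,
      z = ap n f (fun m => if m = 0 then d₁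
        else if m = n - 1 then ap n f (snoc n c z) else c 0) := by
    intro z
    set σ : ℕ → G := fun m => if m = 0 then d₁ else if m < n - 1 then c 0
      else if m < 2 * n - 2 then c (m - (n - 1)) else z with hσ
    have innb : ap n f (fun s => σ (n - 1 + s)) = ap n f (snoc n c z) := by
      apply ap_congr; intro s hs
      simp only [hσ, snoc]
      by_cases h1 : s = n - 1
      · rw [if_neg (by omega : ¬ n - 1 + s = 0), if_neg (by omega : ¬ n - 1 + s < n - 1),
          if_neg (by omega : ¬ n - 1 + s < 2 * n - 2), if_pos h1]
      · rw [if_neg (by omega : ¬ n - 1 + s = 0), if_neg (by omega : ¬ n - 1 + s < n - 1),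
          if_pos (by omega : n - 1 + s < 2 * n - 2), if_neg h1]
        congr 1; omega
    have cb : ap n f (bS n f (n - 1) σ) =
        ap n f (fun m => if m = 0 then d₁
          else if m = n - 1 then ap n f (snoc n c z) else c 0) := by
      apply ap_congr; intro m hm
      simp only [bS]
      by_cases h1 : m = n - 1
      · rw [if_neg (by omega : ¬ m < n - 1), if_pos h1, if_neg (by omega : ¬ m = 0),
          if_pos h1]
        exact innb
      · rw [if_pos (by omega : m < n - 1)]
        simp only [hσ]
        rcases Nat.eq_zero_or_pos m with h0 | h0
        · subst h0; simp
        · rw [if_neg (by omega : ¬ m = 0), if_pos (by omega : m < n - 1),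
            if_neg (by omega : ¬ m = 0), if_neg h1]
    have inn0 : ap n f (fun s => σ (0 + s)) = w := by
      rw [← hd₁]
      apply ap_congr; intro s hs
      simp only [hσ, cons, Nat.zero_add]
      rcases Nat.eq_zero_or_pos s with h0 | h0
      · subst h0; simp
      · by_cases h1 : s < n - 1
        · rw [if_neg (by omega : ¬ s = 0), if_pos h1, if_neg (by omega : ¬ s = 0)]
        · rw [if_neg (by omega : ¬ s = 0), if_neg h1,
            if_pos (by omega : s < 2 * n - 2), if_neg (by omega : ¬ s = 0)]
          rw [show s - (n - 1) = 0 from by omega]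
    have c0 : ap n f (bS n f 0 σ) = z := by
      have outer : ap n f (bS n f 0 σ) =
          ap n f (snoc n (cons w (fun m => c (m + 1))) z) := by
        apply ap_congr; intro m hm
        simp only [bS, snoc, cons]
        rcases Nat.eq_zero_or_pos m with h0 | h0
        · subst h0
          rw [if_neg (Nat.lt_irrefl 0), if_pos rfl, if_neg (by omega : ¬ (0:ℕ) = n - 1),
            if_pos rfl]
          exact inn0
        · rw [if_neg (by omega : ¬ m < 0), if_neg (by omega : ¬ m = 0)]
          simp only [hσ]
          by_cases h1 : m = n - 1
          · rw [if_neg (by omega : ¬ m + n - 1 = 0), if_neg (by omega : ¬ m + n - 1 < n - 1),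
              if_neg (by omega : ¬ m + n - 1 < 2 * n - 2), if_pos h1]
          · rw [if_neg (by omega : ¬ m + n - 1 = 0), if_neg (by omega : ¬ m + n - 1 < n - 1),
              if_pos (by omega : m + n - 1 < 2 * n - 2), if_neg h1,
              if_neg (by omega : ¬ m = 0)]
            rw [show m + n - 1 - (n - 1) = m from by omega,
              show m - 1 + 1 = m from by omega]
      rw [outer]
      exact hwL z
    have := rebr H (n - 1) 0 (by omega) (by omega) σ
    rw [cb, c0] at this
    exact this.symm
  rw [key z, key z', h]


theorem uniqMid (H : Hyp n f bar i j) (p : ℕ) (hp1 : 1 ≤ p) (hp2 : p ≤ n - 2)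
    (X : ℕ → G) (z z' : G) (h : trv n f p X z = trv n f p X z') : z = z' := by
  have hn := H.hn
  set t : ℕ → G := fun m => if m < n - 1 - p then X (p + 1 + m) else X 0 with ht
  obtain ⟨wL, hwL⟩ := rnLast H t
  set ηc : ℕ → G := fun s => if s < n - 1 - p then X 0 else X (s - (n - 1 - p)) with hηc
  have key : ∀ z : G, ap n f (snoc n ηc z) =
      ap n f (fun m => if m = n - 1 - p then trv n f p X z
        else if m = n - 1 then wL else X 0) := by
    intro z
    set σ : ℕ → G := fun m =>
      if m < n - 1 - p then X 0
      else if m < n - 1 then X (m - (n - 1 - p))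
      else if m = n - 1 then z
      else if m ≤ 2 * n - 2 - p then X (m - n + p + 1)
      else if m ≤ 2 * n - 3 then X 0
      else wL with hσ
    have inn0 : ap n f (fun s => σ (0 + s)) = ap n f (snoc n ηc z) := by
      apply ap_congr; intro s hs
      simp only [hσ, hηc, snoc, Nat.zero_add]
      by_cases h1 : s = n - 1
      · rw [if_neg (by omega : ¬ s < n - 1 - p), if_neg (by omega : ¬ s < n - 1),
          if_pos h1, if_pos h1]
      · by_cases h2 : s < n - 1 - p
        · rw [if_pos h2, if_neg h1, if_pos h2]
        · rw [if_neg h2, if_pos (by omega : s < n - 1), if_neg h1, if_neg h2]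
    have c0 : ap n f (bS n f 0 σ) =
        ap n f (cons (ap n f (snoc n ηc z)) (fun m => if m = n - 2 then wL else t m)) := by
      apply ap_congr; intro m hm
      simp only [bS, cons]
      rcases Nat.eq_zero_or_pos m with h0 | h0
      · subst h0
        rw [if_neg (Nat.lt_irrefl 0), if_pos rfl, if_pos rfl]
        exact inn0
      · rw [if_neg (by omega : ¬ m < 0), if_neg (by omega : ¬ m = 0),
          if_neg (by omega : ¬ m = 0)]
        simp only [hσ, ht]
        by_cases h1 : m = n - 1
        · rw [if_neg (by omega : ¬ m + n - 1 < n - 1 - p), if_neg (by omega : ¬ m + n - 1 < n - 1),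
            if_neg (by omega : ¬ m + n - 1 = n - 1), if_neg (by omega : ¬ m + n - 1 ≤ 2 * n - 2 - p),
            if_neg (by omega : ¬ m + n - 1 ≤ 2 * n - 3), if_pos (by omega : m - 1 = n - 2)]
        · by_cases h2 : m ≤ n - 1 - p
          · rw [if_neg (by omega : ¬ m + n - 1 < n - 1 - p), if_neg (by omega : ¬ m + n - 1 < n - 1),
              if_neg (by omega : ¬ m + n - 1 = n - 1), if_pos (by omega : m + n - 1 ≤ 2 * n - 2 - p),
              if_neg (by omega : ¬ m - 1 = n - 2), if_pos (by omega : m - 1 < n - 1 - p)]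
            congr 1; omega
          · rw [if_neg (by omega : ¬ m + n - 1 < n - 1 - p), if_neg (by omega : ¬ m + n - 1 < n - 1),
              if_neg (by omega : ¬ m + n - 1 = n - 1), if_neg (by omega : ¬ m + n - 1 ≤ 2 * n - 2 - p),
              if_pos (by omega : m + n - 1 ≤ 2 * n - 3),
              if_neg (by omega : ¬ m - 1 = n - 2), if_neg (by omega : ¬ m - 1 < n - 1 - p)]
    have innp : ap n f (fun s => σ (n - 1 - p + s)) = trv n f p X z := by
      apply ap_congr; intro s hs
      simp only [hσ, trv]
      by_cases h1 : s = p
      · rw [if_neg (by omega : ¬ n - 1 - p + s < n - 1 - p),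
          if_neg (by omega : ¬ n - 1 - p + s < n - 1),
          if_pos (by omega : n - 1 - p + s = n - 1), if_pos h1]
      · by_cases h2 : s < p
        · rw [if_neg (by omega : ¬ n - 1 - p + s < n - 1 - p),
            if_pos (by omega : n - 1 - p + s < n - 1), if_neg h1]
          congr 1; omega
        · rw [if_neg (by omega : ¬ n - 1 - p + s < n - 1 - p),
            if_neg (by omega : ¬ n - 1 - p + s < n - 1),
            if_neg (by omega : ¬ n - 1 - p + s = n - 1),
            if_pos (by omega : n - 1 - p + s ≤ 2 * n - 2 - p), if_neg h1]
          congr 1; omega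
    have cp : ap n f (bS n f (n - 1 - p) σ) =
        ap n f (fun m => if m = n - 1 - p then trv n f p X z
          else if m = n - 1 then wL else X 0) := by
      apply ap_congr; intro m hm
      simp only [bS]
      by_cases h1 : m = n - 1 - p
      · rw [if_neg (by omega : ¬ m < n - 1 - p), if_pos h1, if_pos h1]
        exact innp
      · by_cases h2 : m < n - 1 - p
        · rw [if_pos h2, if_neg h1, if_neg (by omega : ¬ m = n - 1)]
          simp only [hσ]
          rw [if_pos h2]
        · rw [if_neg h2, if_neg h1, if_neg h1]
          simp only [hσ]
          by_cases h3 : m = n - 1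
          · rw [if_neg (by omega : ¬ m + n - 1 < n - 1 - p),
              if_neg (by omega : ¬ m + n - 1 < n - 1), if_neg (by omega : ¬ m + n - 1 = n - 1),
              if_neg (by omega : ¬ m + n - 1 ≤ 2 * n - 2 - p),
              if_neg (by omega : ¬ m + n - 1 ≤ 2 * n - 3), if_pos h3]
          · rw [if_neg (by omega : ¬ m + n - 1 < n - 1 - p),
              if_neg (by omega : ¬ m + n - 1 < n - 1), if_neg (by omega : ¬ m + n - 1 = n - 1),
              if_neg (by omega : ¬ m + n - 1 ≤ 2 * n - 2 - p),
              if_pos (by omega : m + n - 1 ≤ 2 * n - 3), if_neg h3]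
    have := rebr H 0 (n - 1 - p) (by omega) (by omega) σ
    rw [c0, cp] at this
    rw [← this]
    exact (hwL (ap n f (snoc n ηc z))).symm
  have e := key z
  rw [h, ← key z'] at e
  exact uniqLast H ηc z z' e

theorem existMid (H : Hyp n f bar i j) (p : ℕ) (hp1 : 1 ≤ p) (hp2 : p ≤ n - 2)
    (X : ℕ → G) (b : G) : ∃ z, trv n f p X z = b := by
  have hn := H.hn
  obtain ⟨V₀, hV₀⟩ := firstSurj H (fun m => if m < p then X 0 else X (m + 1)) b
  obtain ⟨zl, hzl⟩ := lastSurj H (fun m => if m < p then X m else X 0) V₀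
  set z : G := ap n f (fun s => if s = n - 1 - p then zl else X 0) with hz
  refine ⟨z, ?_⟩
  set σ : ℕ → G := fun m =>
    if m < p then X m
    else if m < p + n then (if m = n - 1 then zl else X 0)
    else X (m - n + 1) with hσ
  have innp : ap n f (fun s => σ (p + s)) = z := by
    rw [hz]
    apply ap_congr; intro s hs
    simp only [hσ]
    by_cases h1 : s = n - 1 - p
    · rw [if_neg (by omega : ¬ p + s < p), if_pos (by omega : p + s < p + n),
        if_pos (by omega : p + s = n - 1), if_pos h1]
    · rw [if_neg (by omega : ¬ p + s < p), if_pos (by omega : p + s < p + n),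
        if_neg (by omega : ¬ p + s = n - 1), if_neg h1]
  have cp : ap n f (bS n f p σ) = trv n f p X z := by
    apply ap_congr; intro m hm
    simp only [bS, trv]
    by_cases h1 : m = p
    · rw [if_neg (by omega : ¬ m < p), if_pos h1, if_pos h1]
      exact innp
    · by_cases h2 : m < p
      · rw [if_pos h2, if_neg h1]
        simp only [hσ]
        rw [if_pos h2]
      · rw [if_neg h2, if_neg h1, if_neg h1]
        simp only [hσ]
        rw [if_neg (by omega : ¬ m + n - 1 < p), if_neg (by omega : ¬ m + n - 1 < p + n)]
        congr 1; omega
  have inn0 : ap n f (fun s => σ (0 + s)) = V₀ := by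
    rw [← hzl]
    apply ap_congr; intro s hs
    simp only [hσ, snoc, Nat.zero_add]
    by_cases h1 : s = n - 1
    · rw [if_neg (by omega : ¬ s < p), if_pos (by omega : s < p + n), if_pos h1, if_pos h1]
    · by_cases h2 : s < p
      · rw [if_pos h2, if_neg h1, if_pos h2]
      · rw [if_neg h2, if_pos (by omega : s < p + n), if_neg h1, if_neg h1, if_neg h2]
  have c0 : ap n f (bS n f 0 σ) = b := by
    have outer : ap n f (bS n f 0 σ) =
        ap n f (cons V₀ (fun m => if m < p then X 0 else X (m + 1))) := by
      apply ap_congr; intro m hm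
      simp only [bS, cons]
      rcases Nat.eq_zero_or_pos m with h0 | h0
      · subst h0
        rw [if_neg (Nat.lt_irrefl 0), if_pos rfl, if_pos rfl]
        exact inn0
      · rw [if_neg (by omega : ¬ m < 0), if_neg (by omega : ¬ m = 0),
          if_neg (by omega : ¬ m = 0)]
        simp only [hσ]
        by_cases h1 : m ≤ p
        · rw [if_neg (by omega : ¬ m + n - 1 < p), if_pos (by omega : m + n - 1 < p + n),
            if_neg (by omega : ¬ m + n - 1 = n - 1), if_pos (by omega : m - 1 < p)]
        · rw [if_neg (by omega : ¬ m + n - 1 < p), if_neg (by omega : ¬ m + n - 1 < p + n),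
            if_neg (by omega : ¬ m - 1 < p)]
          congr 1; omega
    rw [outer]
    exact hV₀
  have := rebr H p 0 (by omega) (by omega) σ
  rw [cp, c0] at this
  exact this

theorem trv_zero (X : ℕ → G) (z : G) :
    trv n f 0 X z = ap n f (cons z (fun m => X (m + 1))) := by
  apply ap_congr; intro m hm
  simp only [cons]
  rcases Nat.eq_zero_or_pos m with h0 | h0
  · subst h0; simp
  · rw [if_neg (by omega : ¬ m = 0), if_neg (by omega : ¬ m = 0)]
    congr 1; omega

theorem trv_last (X : ℕ → G) (z : G) :
    trv n f (n - 1) X z = ap n f (snoc n X z) := rfl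

theorem injAll (H : Hyp n f bar i j) (p : ℕ) (hp : p < n) (X : ℕ → G) (z z' : G)
    (h : trv n f p X z = trv n f p X z') : z = z' := by
  have hn := H.hn
  rcases Nat.eq_zero_or_pos p with h0 | h0
  · subst h0
    rw [trv_zero, trv_zero] at h
    exact uniq0 H _ z z' h
  · by_cases h1 : p = n - 1
    · subst h1
      rw [trv_last, trv_last] at h
      exact uniqLast H X z z' h
    · exact uniqMid H p (by omega) (by omega) X z z' h

theorem surjAll (H : Hyp n f bar i j) (p : ℕ) (hp : p < n) (X : ℕ → G) (b : G) :
    ∃ z, trv n f p X z = b := by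
  have hn := H.hn
  rcases Nat.eq_zero_or_pos p with h0 | h0
  · subst h0
    obtain ⟨z, hz⟩ := firstSurj H (fun m => X (m + 1)) b
    exact ⟨z, by rw [trv_zero]; exact hz⟩
  · by_cases h1 : p = n - 1
    · subst h1
      obtain ⟨z, hz⟩ := lastSurj H X b
      exact ⟨z, by rw [trv_last]; exact hz⟩
    · exact existMid H p (by omega) (by omega) X b

theorem usolv (H : Hyp n f bar i j) (p : ℕ) (hp : p < n) : IsUSolv n f p := by
  intro x x₀
  set X : ℕ → G := fun m => if h : m < n then x ⟨m, h⟩ else x₀ with hX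
  have conv : ∀ z : G, f (fun m => if (m : ℕ) = p then z else x m) = trv n f p X z := by
    intro z
    apply congrArg f
    funext mf
    dsimp only
    by_cases hmp : (mf : ℕ) = p
    · rw [if_pos hmp, if_pos hmp]
    · rw [if_neg hmp, if_neg hmp]
      simp only [hX]
      rw [dif_pos mf.isLt]
  obtain ⟨z₀, hz₀⟩ := surjAll H p hp X x₀
  refine ⟨z₀, ?_, ?_⟩
  · dsimp only
    rw [conv]; exact hz₀
  · intro y hy
    rw [conv] at hy
    exact injAll H p hp X y z₀ (by rw [hy, hz₀])

theorem skew (H : Hyp n f bar i j) : IsSkewOf n f bar := by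
  have hn := H.hn
  have hi2 := H.hi2
  have hin := H.hin
  intro x
  have base : ap n f (fun m => if m = i - 2 then bar x else x) = x := by
    have e : ap n f (fun m => if m = i - 2 then bar x else x) =
        ap n f (fun m => if m = i - 2 then bar x else if m = n - 1 then x else x) := by
      apply ap_congr; intro m hm
      by_cases h1 : m = i - 2
      · rw [if_pos h1, if_pos h1]
      · rw [if_neg h1, if_neg h1]
        by_cases h2 : m = n - 1
        · rw [if_pos h2]
        · rw [if_neg h2]
    rw [e]; exact H.hA x x
  have step : ∀ c, c ≤ n - 2 → ap n f (fun m => if m = c then bar x else x) = x →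
      ap n f (fun m => if m = c + 1 then bar x else x) = x := by
    intro c hc Pc
    have rn : ∀ y, ap n f (cons y (fun m => if m = c then bar x else x)) = y := by
      intro y
      set σ : ℕ → G := fun m => if m < n - 2 then x else if m = n - 2 then y
        else if m = n - 1 + c then bar x else x with hσ
      have inn1 : ap n f (fun s => σ (n - 1 + s)) = x := by
        have e : ap n f (fun s => σ (n - 1 + s)) =
            ap n f (fun s => if s = c then bar x else x) := by
          apply ap_congr; intro s hs
          simp only [hσ]
          by_cases h1 : s = c
          · rw [if_neg (by omega : ¬ n - 1 + s < n - 2), if_neg (by omega : ¬ n - 1 + s = n - 2),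
              if_pos (by omega : n - 1 + s = n - 1 + c), if_pos h1]
          · rw [if_neg (by omega : ¬ n - 1 + s < n - 2), if_neg (by omega : ¬ n - 1 + s = n - 2),
              if_neg (by omega : ¬ n - 1 + s = n - 1 + c), if_neg h1]
        rw [e]; exact Pc
      have c1 : ap n f (bS n f (n - 1) σ) = trv n f (n - 2) (fun _ => x) y := by
        apply ap_congr; intro m hm
        simp only [bS, trv]
        by_cases h1 : m = n - 1
        · rw [if_neg (by omega : ¬ m < n - 1), if_pos h1, if_neg (by omega : ¬ m = n - 2), inn1]
        · rw [if_pos (by omega : m < n - 1)]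
          simp only [hσ]
          by_cases h2 : m = n - 2
          · rw [if_neg (by omega : ¬ m < n - 2), if_pos h2, if_pos h2]
          · rw [if_pos (by omega : m < n - 2), if_neg h2]
      have inn2 : ap n f (fun s => σ (n - 2 + s)) =
          ap n f (cons y (fun m => if m = c then bar x else x)) := by
        apply ap_congr; intro s hs
        simp only [hσ, cons]
        rcases Nat.eq_zero_or_pos s with h0 | h0
        · subst h0
          rw [if_neg (by omega : ¬ n - 2 + 0 < n - 2), if_pos (by omega : n - 2 + 0 = n - 2)]
          simp
        · by_cases h1 : s - 1 = c
          · rw [if_neg (by omega : ¬ n - 2 + s < n - 2), if_neg (by omega : ¬ n - 2 + s = n - 2),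
              if_pos (by omega : n - 2 + s = n - 1 + c), if_neg (by omega : ¬ s = 0), if_pos h1]
          · rw [if_neg (by omega : ¬ n - 2 + s < n - 2), if_neg (by omega : ¬ n - 2 + s = n - 2),
              if_neg (by omega : ¬ n - 2 + s = n - 1 + c), if_neg (by omega : ¬ s = 0),
              if_neg h1]
      have c2 : ap n f (bS n f (n - 2) σ) =
          trv n f (n - 2) (fun _ => x)
            (ap n f (cons y (fun m => if m = c then bar x else x))) := by
        apply ap_congr; intro m hm
        simp only [bS, trv]
        by_cases h1 : m = n - 2
        · rw [if_neg (by omega : ¬ m < n - 2), if_pos h1, if_pos h1, inn2]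
        · by_cases h2 : m = n - 1
          · rw [if_neg (by omega : ¬ m < n - 2), if_neg h1, if_neg h1]
            simp only [hσ]
            rw [if_neg (by omega : ¬ m + n - 1 < n - 2), if_neg (by omega : ¬ m + n - 1 = n - 2),
              if_neg (by omega : ¬ m + n - 1 = n - 1 + c)]
          · rw [if_pos (by omega : m < n - 2), if_neg h1]
            simp only [hσ]
            rw [if_pos (by omega : m < n - 2)]
      have := rebr H (n - 1) (n - 2) (by omega) (by omega) σ
      rw [c1, c2] at this
      exact (uniqMid H (n - 2) (by omega) (by omega) (fun _ => x) _ _ this).symm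
    have e : ap n f (fun m => if m = c + 1 then bar x else x) =
        ap n f (cons x (fun m => if m = c then bar x else x)) := by
      apply ap_congr; intro m hm
      simp only [cons]
      rcases Nat.eq_zero_or_pos m with h0 | h0
      · subst h0
        rw [if_neg (by omega : ¬ (0:ℕ) = c + 1)]
        simp
      · by_cases h1 : m = c + 1
        · rw [if_pos h1, if_neg (by omega : ¬ m = 0), if_pos (by omega : m - 1 = c)]
        · rw [if_neg h1, if_neg (by omega : ¬ m = 0), if_neg (by omega : ¬ m - 1 = c)]
    rw [e]
    exact rn x
  have all : ∀ c, i - 2 ≤ c → c ≤ n - 1 →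
      ap n f (fun m => if m = c then bar x else x) = x := by
    intro c
    induction c with
    | zero =>
      intro hc1 _
      have : i - 2 = 0 := by omega
      rw [← this]
      exact base
    | succ c ih =>
      intro hc1 hc2
      by_cases hci : i - 2 = c + 1
      · rw [← hci]; exact base
      · exact step c (by omega) (ih (by omega) (by omega))
  exact all (n - 1) (by omega) (le_refl _)

section Backward

variable (hn : 2 < n) (hG : IsNAryGroup n f)

theorem b_rebr (hG : IsNAryGroup n f) (p q : ℕ) (hp : p < n) (hq : q < n) (σ : ℕ → G) :
    ap n f (bS n f p σ) = ap n f (bS n f q σ) := by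
  have := hG.1 p q hp hq σ
  rwa [applyAt_eq, applyAt_eq] at this

theorem b_inj (hG : IsNAryGroup n f) (p : ℕ) (hp : p < n) (X : ℕ → G) (z z' : G)
    (h : trv n f p X z = trv n f p X z') : z = z' := by
  obtain ⟨w, hw, huniq⟩ := hG.2 p hp (fun mf => X (mf : ℕ)) (trv n f p X z)
  have e1 : z = w := huniq z rfl
  have e2 : z' = w := huniq z' h.symm
  rw [e1, e2]

theorem b_surj (hG : IsNAryGroup n f) (p : ℕ) (hp : p < n) (X : ℕ → G) (b : G) :
    ∃ z, trv n f p X z = b := by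
  obtain ⟨z, hz, _⟩ := hG.2 p hp (fun mf => X (mf : ℕ)) b
  exact ⟨z, hz⟩

theorem b_id1 (hn : 2 < n) (hG : IsNAryGroup n f) (hS : IsSkewOf n f bar) (x y : G) :
    ap n f (fun m => if m = n - 2 then bar x else if m = n - 1 then y else x) = y := by
  have hsk : ap n f (fun m => if m = n - 1 then bar x else x) = x := hS x
  set σ : ℕ → G := fun m => if m < n then (if m = n - 1 then bar x else x)
    else if m = n then y else x with hσ
  have inn0 : ap n f (fun s => σ (0 + s)) = x := by
    rw [← hsk]
    apply ap_congr; intro s hs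
    simp only [hσ, Nat.zero_add]
    rw [if_pos hs]
  have c0 : ap n f (bS n f 0 σ) = trv n f 1 (fun _ => x) y := by
    apply ap_congr; intro m hm
    simp only [bS, trv]
    rcases Nat.eq_zero_or_pos m with h0 | h0
    · subst h0
      rw [if_neg (Nat.lt_irrefl 0), if_pos rfl, if_neg (by omega : ¬ (0:ℕ) = 1)]
      exact inn0
    · by_cases h1 : m = 1
      · rw [if_neg (by omega : ¬ m < 0), if_neg (by omega : ¬ m = 0), if_pos h1]
        simp only [hσ]
        rw [if_neg (by omega : ¬ m + n - 1 < n), if_pos (by omega : m + n - 1 = n)]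
      · rw [if_neg (by omega : ¬ m < 0), if_neg (by omega : ¬ m = 0), if_neg h1]
        simp only [hσ]
        rw [if_neg (by omega : ¬ m + n - 1 < n), if_neg (by omega : ¬ m + n - 1 = n)]
  have inn1 : ap n f (fun s => σ (1 + s)) =
      ap n f (fun m => if m = n - 2 then bar x else if m = n - 1 then y else x) := by
    apply ap_congr; intro s hs
    simp only [hσ]
    by_cases h1 : s = n - 1
    · rw [if_neg (by omega : ¬ 1 + s < n), if_pos (by omega : 1 + s = n),
        if_neg (by omega : ¬ s = n - 2), if_pos h1]
    · by_cases h2 : s = n - 2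
      · rw [if_pos (by omega : 1 + s < n), if_pos (by omega : 1 + s = n - 1), if_pos h2]
      · rw [if_pos (by omega : 1 + s < n), if_neg (by omega : ¬ 1 + s = n - 1),
          if_neg h2, if_neg h1]
  have c1 : ap n f (bS n f 1 σ) = trv n f 1 (fun _ => x)
      (ap n f (fun m => if m = n - 2 then bar x else if m = n - 1 then y else x)) := by
    apply ap_congr; intro m hm
    simp only [bS, trv]
    rcases Nat.eq_zero_or_pos m with h0 | h0
    · subst h0
      rw [if_pos (by omega : (0:ℕ) < 1), if_neg (by omega : ¬ (0:ℕ) = 1)]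
      simp only [hσ]
      rw [if_pos (by omega : (0:ℕ) < n), if_neg (by omega : ¬ (0:ℕ) = n - 1)]
    · by_cases h1 : m = 1
      · rw [if_neg (by omega : ¬ m < 1), if_pos h1, if_pos h1]
        exact inn1
      · rw [if_neg (by omega : ¬ m < 1), if_neg h1, if_neg h1]
        simp only [hσ]
        rw [if_neg (by omega : ¬ m + n - 1 < n), if_neg (by omega : ¬ m + n - 1 = n)]
  have e := b_rebr hG 0 1 (by omega) (by omega) σ
  rw [c0, c1] at e
  exact (b_inj hG 1 (by omega) (fun _ => x) _ _ e).symm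

theorem b_id2 (hn : 2 < n) (hG : IsNAryGroup n f) (hS : IsSkewOf n f bar) (x y : G) :
    ap n f (fun m => if m = 0 then y else if m = n - 1 then bar x else x) = y := by
  obtain ⟨v, hv⟩ := b_surj hG 0 (by omega) (fun m => if m = n - 1 then bar x else x) y
  set σ : ℕ → G := fun m => if m = 0 then v else if m < n - 1 then x
    else if m = n - 1 then bar x else if m < 2 * n - 2 then x else bar x with hσ
  have inn0 : ap n f (fun s => σ (0 + s)) = y := by
    rw [← hv]
    apply ap_congr; intro s hs
    simp only [hσ, trv, Nat.zero_add]
    rcases Nat.eq_zero_or_pos s with h0 | h0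
    · subst h0
      rw [if_pos rfl, if_pos rfl]
    · by_cases h1 : s = n - 1
      · rw [if_neg (by omega : ¬ s = 0), if_neg (by omega : ¬ s < n - 1), if_pos h1,
          if_neg (by omega : ¬ s = 0), if_pos h1]
      · rw [if_neg (by omega : ¬ s = 0), if_pos (by omega : s < n - 1),
          if_neg (by omega : ¬ s = 0), if_neg h1]
  have c0 : ap n f (bS n f 0 σ) =
      ap n f (fun m => if m = 0 then y else if m = n - 1 then bar x else x) := by
    apply ap_congr; intro m hm
    simp only [bS]
    rcases Nat.eq_zero_or_pos m with h0 | h0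
    · subst h0
      rw [if_neg (Nat.lt_irrefl 0), if_pos rfl, if_pos rfl]
      exact inn0
    · rw [if_neg (by omega : ¬ m < 0), if_neg (by omega : ¬ m = 0), if_neg (by omega : ¬ m = 0)]
      simp only [hσ]
      by_cases h1 : m = n - 1
      · rw [if_neg (by omega : ¬ m + n - 1 = 0), if_neg (by omega : ¬ m + n - 1 < n - 1),
          if_neg (by omega : ¬ m + n - 1 = n - 1), if_neg (by omega : ¬ m + n - 1 < 2 * n - 2),
          if_pos h1]
      · rw [if_neg (by omega : ¬ m + n - 1 = 0), if_neg (by omega : ¬ m + n - 1 < n - 1),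
          if_neg (by omega : ¬ m + n - 1 = n - 1), if_pos (by omega : m + n - 1 < 2 * n - 2),
          if_neg h1]
  have inn1 : ap n f (fun s => σ (1 + s)) = x := by
    have e : ap n f (fun s => σ (1 + s)) =
        ap n f (fun m => if m = n - 2 then bar x else if m = n - 1 then x else x) := by
      apply ap_congr; intro s hs
      simp only [hσ]
      by_cases h1 : s = n - 2
      · rw [if_neg (by omega : ¬ 1 + s = 0), if_neg (by omega : ¬ 1 + s < n - 1),
          if_pos (by omega : 1 + s = n - 1), if_pos h1]
      · by_cases h2 : s = n - 1
        · rw [if_neg (by omega : ¬ 1 + s = 0), if_neg (by omega : ¬ 1 + s < n - 1),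
            if_neg (by omega : ¬ 1 + s = n - 1), if_pos (by omega : 1 + s < 2 * n - 2),
            if_neg h1, if_pos h2]
        · rw [if_neg (by omega : ¬ 1 + s = 0), if_pos (by omega : 1 + s < n - 1),
            if_neg h1, if_neg h2]
    rw [e]
    exact b_id1 hn hG hS x x
  have c1 : ap n f (bS n f 1 σ) = y := by
    have outer : ap n f (bS n f 1 σ) = ap n f (fun s => σ (0 + s)) := by
      apply ap_congr; intro m hm
      simp only [bS, Nat.zero_add]
      rcases Nat.eq_zero_or_pos m with h0 | h0
      · subst h0
        rw [if_pos (by omega : (0:ℕ) < 1)]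
      · by_cases h1 : m = 1
        · rw [if_neg (by omega : ¬ m < 1), if_pos h1, inn1]
          simp only [hσ]
          rw [if_neg (by omega : ¬ m = 0), if_pos (by omega : m < n - 1)]
        · rw [if_neg (by omega : ¬ m < 1), if_neg h1]
          simp only [hσ]
          by_cases h2 : m = n - 1
          · rw [if_neg (by omega : ¬ m + n - 1 = 0), if_neg (by omega : ¬ m + n - 1 < n - 1),
              if_neg (by omega : ¬ m + n - 1 = n - 1), if_neg (by omega : ¬ m + n - 1 < 2 * n - 2),
              if_neg (by omega : ¬ m = 0), if_neg (by omega : ¬ m < n - 1), if_pos h2]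
          · rw [if_neg (by omega : ¬ m + n - 1 = 0), if_neg (by omega : ¬ m + n - 1 < n - 1),
              if_neg (by omega : ¬ m + n - 1 = n - 1), if_pos (by omega : m + n - 1 < 2 * n - 2),
              if_neg (by omega : ¬ m = 0), if_pos (by omega : m < n - 1)]
    rw [outer]
    exact inn0
  have e := b_rebr hG 0 1 (by omega) (by omega) σ
  rw [c0, c1] at e
  exact e

end Backward

end Dudek

/-- Dudek, 1980.
An `n`-ary groupoid `(G,f)` with a unary operation `x ↦ x̄` satisfies, for some fixed
`i, j ∈ {2,…,n}`, the two Dörnte identities together with the `(1,2)`-associative law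
iff `(G,f)` is an `n`-ary group and `x̄` is the skew element of `x` for every `x`. -/
theorem nary_group_iff_minimal_identities {G : Type*} (n : ℕ) (hn : 2 < n)
    (f : (Fin n → G) → G) (bar : G → G) :
    ((∃ i j : ℕ, 2 ≤ i ∧ i ≤ n ∧ 2 ≤ j ∧ j ≤ n ∧
        (∀ x y : G,
          f (fun m => if (m : ℕ) = i - 2 then bar x
              else if (m : ℕ) = n - 1 then y else x) = y) ∧
        (∀ x y : G,
          f (fun m => if (m : ℕ) = 0 then y
              else if (m : ℕ) = n - j + 1 then bar x else x) = y)) ∧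
      IsAssocAt n f 0 1)
    ↔ (IsNAryGroup n f ∧ IsSkewOf n f bar) := by
  constructor
  · rintro ⟨⟨i, j, hi2, hin, hj2, hjn, hA, hB⟩, h01⟩
    have H : Dudek.Hyp n f bar i j :=
      ⟨hn, hi2, hin, hj2, hjn, hA, hB, fun x => h01 x⟩
    exact ⟨⟨Dudek.fullAssoc H, fun p hp => Dudek.usolv H p hp⟩, Dudek.skew H⟩
  · rintro ⟨hG, hS⟩
    refine ⟨⟨n, 2, by omega, le_rfl, by omega, by omega, ?_, ?_⟩, ?_⟩
    · intro x y
      exact Dudek.b_id1 hn hG hS x y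
    · intro x y
      rw [show n - 2 + 1 = n - 1 from by omega]
      exact Dudek.b_id2 hn hG hS x y
    · exact hG.1 0 1 (by omega) (by omega)
end

section
/- Let n > 2, let (G,f) be an n-ary group, and let x ∈ G have finite n-ary order ord_n(x). Then ord_n(x) = ord_n(x̄) if and only if ord_n(x) and n−2 are relatively prime. -/
/-- `n`-ary powers: `x^{<0>} = x`, `x^{<k+1>} = f(x,…,x, x^{<k>})` (`n-1` copies of `x`). -/
def nPow {G : Type*} (n : ℕ) (f : (Fin n → G) → G) (x : G) : ℕ → G
  | 0 => x
  | k + 1 => f (fun m => if (m : ℕ) = n - 1 then nPow n f x k else x)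

section Aux

variable {G : Type*}


variable {G : Type*}

private lemma nPow_succ (n : ℕ) (f : (Fin n → G) → G) (x : G) (k : ℕ) :
    nPow n f x (k + 1) = f (fun m : Fin n => if (m : ℕ) = n - 1 then nPow n f x k else x) := rfl

private lemma tinj (n : ℕ) (f : (Fin n → G) → G) (hU : IsUSolv n f (n - 1)) (x z z' : G)
    (h : f (fun m : Fin n => if (m : ℕ) = n - 1 then z else x)
       = f (fun m : Fin n => if (m : ℕ) = n - 1 then z' else x)) : z = z' := by
  obtain ⟨u, -, hu⟩ := hU (fun _ => x) (f (fun m : Fin n => if (m : ℕ) = n - 1 then z' else x))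
  have h1 : z = u := hu z h
  have h2 : z' = u := hu z' rfl
  rw [h1, h2]

private lemma shift_iff (n : ℕ) (f : (Fin n → G) → G) (hU : IsUSolv n f (n - 1)) (x : G) :
    ∀ m a b : ℕ, (nPow n f x (a + m) = nPow n f x (b + m) ↔ nPow n f x a = nPow n f x b) := by
  intro m
  induction m with
  | zero => intro a b; rfl
  | succ m IH =>
    intro a b
    have ha : a + (m + 1) = (a + m) + 1 := by omega
    have hb : b + (m + 1) = (b + m) + 1 := by omega
    rw [ha, hb, nPow_succ, nPow_succ]
    constructor
    · intro h
      exact (IH a b).mp (tinj n f hU x _ _ h)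
    · intro h
      have h2 := (IH a b).mpr h
      simp only [h2]

private lemma mod_char (n : ℕ) (f : (Fin n → G) → G) (hU : IsUSolv n f (n - 1)) (x : G)
    (d : ℕ) (hd0 : 0 < d) (hdx : nPow n f x d = x)
    (hdmin : ∀ k, 0 < k → nPow n f x k = x → d ≤ k) (a b : ℕ) :
    nPow n f x a = nPow n f x b ↔ a % d = b % d := by
  have hper : ∀ m : ℕ, nPow n f x (m + d) = nPow n f x m := by
    intro m
    have h := shift_iff n f hU x m d 0
    rw [Nat.zero_add] at h
    have : nPow n f x (d + m) = nPow n f x m := by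
      have h0 : nPow n f x d = nPow n f x 0 := hdx
      exact h.mpr h0
    rw [Nat.add_comm] at this
    exact this
  have hperq : ∀ q m : ℕ, nPow n f x (m + q * d) = nPow n f x m := by
    intro q
    induction q with
    | zero => intro m; simp
    | succ q IH =>
      intro m
      have h1 : m + (q + 1) * d = (m + d) + q * d := by ring
      rw [h1, IH, hper]
  have hmod : ∀ a : ℕ, nPow n f x a = nPow n f x (a % d) := by
    intro a
    conv_lhs => rw [show a = a % d + a / d * d from (Nat.mod_add_div' a d).symm]
    exact hperq _ _
  have hsmall : ∀ r1 r2 : ℕ, r1 < d → r2 < d → r1 ≤ r2 →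
      nPow n f x r1 = nPow n f x r2 → r1 = r2 := by
    intro r1 r2 h1 h2 hle heq
    by_contra hne
    have h3 : nPow n f x (0 + r1) = nPow n f x ((r2 - r1) + r1) := by
      rw [Nat.zero_add, show r2 - r1 + r1 = r2 by omega]
      exact heq
    have h4 := (shift_iff n f hU x r1 0 (r2 - r1)).mp h3
    have h5 : nPow n f x (r2 - r1) = x := h4.symm
    have := hdmin (r2 - r1) (by omega) h5
    omega
  constructor
  · intro h
    have h2 : nPow n f x (a % d) = nPow n f x (b % d) := by rw [← hmod, ← hmod, h]
    rcases le_total (a % d) (b % d) with hle | hle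
    · exact hsmall _ _ (Nat.mod_lt _ hd0) (Nat.mod_lt _ hd0) hle h2
    · exact (hsmall _ _ (Nat.mod_lt _ hd0) (Nat.mod_lt _ hd0) hle h2.symm).symm
  · intro h
    rw [hmod a, hmod b, h]


private lemma lemC (n : ℕ) (hn : 2 < n) (f : (Fin n → G) → G)
    (hassoc : IsNAssoc n f) (x : G) :
    ∀ s : ℕ, ∀ e : ℕ → ℕ, (∑ t ∈ Finset.range n, e t) = s →
      f (fun m : Fin n => nPow n f x (e (m : ℕ))) = nPow n f x (s + 1) := by
  intro s
  induction s using Nat.strong_induction_on with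
  | _ s IH =>
    intro e hs
    by_cases hall : ∀ t, t < n → e t = 0
    · have hs0 : s = 0 := by
        rw [← hs]
        exact Finset.sum_eq_zero fun t ht => hall t (Finset.mem_range.mp ht)
      subst hs0
      show _ = f (fun m : Fin n => if (m : ℕ) = n - 1 then nPow n f x 0 else x)
      congr 1
      funext m
      rw [hall (m : ℕ) m.isLt]
      by_cases h : (m : ℕ) = n - 1 <;> simp [h, nPow]
    · push_neg at hall
      obtain ⟨t₀, ht₀n, ht₀⟩ := hall
      have hex : ∃ t, 0 < e t := ⟨t₀, Nat.pos_of_ne_zero ht₀⟩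
      have hei : 0 < e (Nat.find hex) := Nat.find_spec hex
      set i := Nat.find hex with hidef
      have hin : i < n := lt_of_le_of_lt (Nat.find_min' hex (Nat.pos_of_ne_zero ht₀)) ht₀n
      have hmin : ∀ j, j < i → e j = 0 := by
        intro j hj
        have := Nat.find_min hex hj
        omega
      have hs1 : 1 ≤ s := by
        rw [← hs]
        calc 1 ≤ e i := hei
        _ ≤ ∑ t ∈ Finset.range n, e t :=
            Finset.single_le_sum (fun t _ => Nat.zero_le _) (Finset.mem_range.mpr hin)
      set c : ℕ → ℕ := fun t =>
        if t < i + (n - 1) then 0 else if t = i + (n - 1) then e i - 1 else e (t - (n - 1))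
        with hc
      set w : ℕ → G := fun t => nPow n f x (c t) with hw
      have hinner1 : f (fun t : Fin n => w (i + (t : ℕ))) = nPow n f x (e i) := by
        have h1 : (fun t : Fin n => w (i + (t : ℕ)))
            = fun t : Fin n => if (t : ℕ) = n - 1 then nPow n f x (e i - 1) else x := by
          funext t
          have htn : (t : ℕ) < n := t.isLt
          simp only [hw, hc]
          by_cases h : (t : ℕ) = n - 1
          · rw [if_pos h, if_neg (by omega : ¬ (i + (t : ℕ) < i + (n - 1))),
              if_pos (by omega : i + (t : ℕ) = i + (n - 1))]
          · rw [if_neg h, if_pos (by omega : i + (t : ℕ) < i + (n - 1))]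
            rfl
        rw [h1]
        conv_rhs => rw [show e i = (e i - 1) + 1 by omega]
        rfl
      have hstep1 : f (fun m : Fin n => nPow n f x (e (m : ℕ))) = applyAt n f w i := by
        show _ = f fun j : Fin n => if (j : ℕ) < i then w (j : ℕ)
          else if (j : ℕ) = i then f (fun t : Fin n => w (i + (t : ℕ)))
          else w ((j : ℕ) + n - 1)
        congr 1
        funext j
        rcases lt_trichotomy ((j : ℕ)) i with h | h | h
        · rw [if_pos h]
          simp only [hw, hc]
          rw [if_pos (by omega : (j : ℕ) < i + (n - 1)), hmin _ h]
        · rw [if_neg (by omega : ¬ ((j : ℕ) < i)), if_pos h, hinner1, h]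
        · rw [if_neg (by omega : ¬ ((j : ℕ) < i)), if_neg (by omega : ¬ ((j : ℕ) = i))]
          simp only [hw, hc]
          rw [if_neg (by omega : ¬ ((j : ℕ) + n - 1 < i + (n - 1))),
            if_neg (by omega : ¬ ((j : ℕ) + n - 1 = i + (n - 1)))]
          rw [show (j : ℕ) + n - 1 - (n - 1) = (j : ℕ) by omega]
      have hassoc1 := hassoc i (n - 1) hin (by omega) w
      set e' : ℕ → ℕ := fun t => c ((n - 1) + t) with he'
      have hsum' : ∑ t ∈ Finset.range n, e' t = s - 1 := by
        have h1 : ∀ t ∈ Finset.range n, e' t = Function.update e i (e i - 1) t := by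
          intro t ht
          rw [Finset.mem_range] at ht
          simp only [he', hc, Function.update_apply]
          rcases lt_trichotomy t i with h | h | h
          · rw [if_pos (by omega : (n - 1) + t < i + (n - 1)), if_neg (by omega : ¬ (t = i)),
              hmin _ h]
          · rw [if_neg (by omega : ¬ ((n - 1) + t < i + (n - 1))),
              if_pos (by omega : (n - 1) + t = i + (n - 1)), if_pos h]
          · rw [if_neg (by omega : ¬ ((n - 1) + t < i + (n - 1))),
              if_neg (by omega : ¬ ((n - 1) + t = i + (n - 1))), if_neg (by omega : ¬ (t = i))]
            rw [show (n - 1) + t - (n - 1) = t by omega]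
        rw [Finset.sum_congr rfl h1, Finset.sum_update_of_mem (Finset.mem_range.mpr hin)]
        have h2 : ∑ t ∈ Finset.range n, e t = e i + ∑ t ∈ (Finset.range n).erase i, e t :=
          (Finset.add_sum_erase _ _ (Finset.mem_range.mpr hin)).symm
        rw [Finset.sdiff_singleton_eq_erase]
        omega
      have hinner3 : f (fun t : Fin n => w ((n - 1) + (t : ℕ))) = nPow n f x s := by
        have h1 : (fun t : Fin n => w ((n - 1) + (t : ℕ)))
            = fun t : Fin n => nPow n f x (e' (t : ℕ)) := rfl
        rw [h1, IH (s - 1) (by omega) e' hsum', show s - 1 + 1 = s by omega]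
      have hstep3 : applyAt n f w (n - 1) = nPow n f x (s + 1) := by
        show (f fun j : Fin n => if (j : ℕ) < n - 1 then w (j : ℕ)
          else if (j : ℕ) = n - 1 then f (fun t : Fin n => w ((n - 1) + (t : ℕ)))
          else w ((j : ℕ) + n - 1)) = _
        rw [nPow_succ]
        congr 1
        funext j
        have hjn : (j : ℕ) < n := j.isLt
        by_cases h : (j : ℕ) = n - 1
        · rw [if_neg (by omega : ¬ ((j : ℕ) < n - 1)), if_pos h, hinner3, if_pos h]
        · rw [if_pos (by omega : (j : ℕ) < n - 1), if_neg h]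
          simp only [hw, hc]
          rw [if_pos (by omega : (j : ℕ) < i + (n - 1))]
          rfl
      rw [hstep1, hassoc1, hstep3]


end Aux

/-- I.M. Dudek–W.A. Dudek, 1981.
If `x` has finite `n`-ary order, then `ord_n(x) = ord_n(x̄)` iff `ord_n(x)` and `n-2`
are relatively prime. -/
theorem order_eq_order_skew_iff_coprime {G : Type*} (n : ℕ) (hn : 2 < n)
    (f : (Fin n → G) → G) (hG : IsNAryGroup n f)
    (bar : G → G) (hbar : IsSkewOf n f bar) (x : G)
    (hfin : ∃ k : ℕ, 0 < k ∧ nPow n f x k = x) :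
    sInf {k : ℕ | 0 < k ∧ nPow n f x k = x} =
      sInf {k : ℕ | 0 < k ∧ nPow n f (bar x) k = bar x} ↔
    Nat.Coprime (sInf {k : ℕ | 0 < k ∧ nPow n f x k = x}) (n - 2) := by
  classical
  obtain ⟨hassoc, hUall⟩ := hG
  have hU : IsUSolv n f (n - 1) := hUall (n - 1) (by omega)
  have hSne : {k : ℕ | 0 < k ∧ nPow n f x k = x}.Nonempty := by
    obtain ⟨k, hk1, hk2⟩ := hfin
    exact ⟨k, hk1, hk2⟩
  set d : ℕ := sInf {k : ℕ | 0 < k ∧ nPow n f x k = x} with hdd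
  obtain ⟨hd0, hdx⟩ := Nat.sInf_mem hSne
  have hdmin : ∀ k, 0 < k → nPow n f x k = x → d ≤ k := fun k h1 h2 => Nat.sInf_le ⟨h1, h2⟩
  have hchar := mod_char n f hU x d hd0 hdx hdmin
  -- bar x = x^(d-1)
  have hbarx : bar x = nPow n f x (d - 1) := by
    obtain ⟨u, -, hu⟩ := hU (fun _ => x) x
    have h1 : bar x = u := hu (bar x) (hbar x)
    have h2 : nPow n f x (d - 1) = u := by
      apply hu
      show f (fun m : Fin n => if (m : ℕ) = n - 1 then nPow n f x (d - 1) else x) = x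
      have h3 : nPow n f x (d - 1 + 1) = x := by
        rw [show d - 1 + 1 = d by omega]; exact hdx
      exact h3
    rw [h1, h2]
  set A : ℕ := (n - 1) * (d - 1) + 1 with hA
  have hyk : ∀ k : ℕ, nPow n f (bar x) k = nPow n f x ((d - 1) + k * A) := by
    intro k
    induction k with
    | zero => simpa [nPow] using hbarx
    | succ k IH =>
      set e : ℕ → ℕ := fun t => if t = n - 1 then (d - 1) + k * A else d - 1 with he
      have hfun : (fun m : Fin n => if (m : ℕ) = n - 1 then nPow n f (bar x) k else bar x)
          = fun m : Fin n => nPow n f x (e (m : ℕ)) := by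
        funext m
        by_cases h : (m : ℕ) = n - 1
        · simp only [he, if_pos h, IH]
        · simp only [he, if_neg h, hbarx]
      have hupd : ∀ t ∈ Finset.range n, e t
          = Function.update (fun _ : ℕ => d - 1) (n - 1) ((d - 1) + k * A) t := by
        intro t _
        simp only [he, Function.update_apply]
      have hsum : ∑ t ∈ Finset.range n, e t = ((d - 1) + k * A) + (n - 1) * (d - 1) := by
        rw [Finset.sum_congr rfl hupd,
          Finset.sum_update_of_mem (Finset.mem_range.mpr (by omega : n - 1 < n)),
          Finset.sum_const, Finset.sdiff_singleton_eq_erase,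
          Finset.card_erase_of_mem (Finset.mem_range.mpr (by omega : n - 1 < n)),
          Finset.card_range, smul_eq_mul]
      calc nPow n f (bar x) (k + 1)
          = f (fun m : Fin n => if (m : ℕ) = n - 1 then nPow n f (bar x) k else bar x) := rfl
        _ = f (fun m : Fin n => nPow n f x (e (m : ℕ))) := by rw [hfun]
        _ = nPow n f x ((((d - 1) + k * A) + (n - 1) * (d - 1)) + 1) :=
            lemC n hn f hassoc x _ e hsum
        _ = nPow n f x ((d - 1) + (k + 1) * A) := by
            congr 1
            rw [hA]
            ring
  set g := Nat.gcd d (n - 2) with hg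
  have hg0 : 0 < g := Nat.gcd_pos_of_pos_left _ hd0
  have hAd : A + (n - 2) = (n - 1) * d := by
    have e2 : n - 1 = (n - 3) + 2 := by omega
    have e3 : n - 2 = (n - 3) + 1 := by omega
    have e4 : d = (d - 1) + 1 := by omega
    rw [hA, e2, e3]
    conv_rhs => rw [e4]
    ring
  have hdvd_iff : ∀ k : ℕ, (d ∣ k * A) ↔ (d ∣ k * (n - 2)) := by
    intro k
    have hkey : k * A + k * (n - 2) = (k * (n - 1)) * d := by
      rw [← Nat.mul_add, hAd]; ring
    constructor
    · intro h
      have h2 : k * (n - 2) = (k * (n - 1)) * d - k * A := by omega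
      rw [h2]
      exact Nat.dvd_sub (dvd_mul_left d (k * (n - 1))) h
    · intro h
      have h2 : k * A = (k * (n - 1)) * d - k * (n - 2) := by omega
      rw [h2]
      exact Nat.dvd_sub (dvd_mul_left d (k * (n - 1))) h
  have hmem : ∀ k : ℕ, (0 < k ∧ nPow n f (bar x) k = bar x) ↔ (0 < k ∧ d / g ∣ k) := by
    intro k
    have h1 : nPow n f (bar x) k = bar x ↔ d ∣ k * A := by
      rw [hyk k, hbarx, hchar]
      constructor
      · intro h
        have h2 : (d - 1) + k * A ≡ (d - 1) + 0 [MOD d] := by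
          show ((d - 1) + k * A) % d = ((d - 1) + 0) % d
          rw [Nat.add_zero]
          exact h
        have h3 : k * A ≡ 0 [MOD d] := Nat.ModEq.add_left_cancel' (d - 1) h2
        exact (Nat.modEq_zero_iff_dvd).mp h3
      · intro h
        have h3 : k * A ≡ 0 [MOD d] := (Nat.modEq_zero_iff_dvd).mpr h
        have h2 : (d - 1) + k * A ≡ (d - 1) + 0 [MOD d] := Nat.ModEq.add_left _ h3
        show ((d - 1) + k * A) % d = (d - 1) % d
        have h4 : ((d - 1) + k * A) % d = ((d - 1) + 0) % d := h2
        rw [Nat.add_zero] at h4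
        exact h4
    have h4 : d ∣ k * (n - 2) ↔ d / g ∣ k := by
      have hcop : Nat.Coprime (d / g) ((n - 2) / g) := Nat.coprime_div_gcd_div_gcd hg0
      have hdg : d / g * g = d := Nat.div_mul_cancel (Nat.gcd_dvd_left _ _)
      have hng : (n - 2) / g * g = n - 2 := Nat.div_mul_cancel (Nat.gcd_dvd_right _ _)
      constructor
      · intro h
        have h5 : (d / g) * g ∣ (k * ((n - 2) / g)) * g := by
          rw [hdg]
          rw [mul_assoc, hng]
          exact h
        have h6 : d / g ∣ k * ((n - 2) / g) :=
          (Nat.mul_dvd_mul_iff_right hg0).mp h5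
        exact hcop.dvd_of_dvd_mul_right h6
      · intro h
        calc d = (d / g) * g := hdg.symm
          _ ∣ k * (n - 2) := Nat.mul_dvd_mul h (Nat.gcd_dvd_right d (n - 2))
    rw [h1, hdvd_iff k, h4]
  have hS'eq : {k : ℕ | 0 < k ∧ nPow n f (bar x) k = bar x} = {k : ℕ | 0 < k ∧ d / g ∣ k} :=
    Set.ext fun k => hmem k
  have hdg0 : 0 < d / g := Nat.div_pos (Nat.le_of_dvd hd0 (Nat.gcd_dvd_left _ _)) hg0
  have hinf : sInf {k : ℕ | 0 < k ∧ d / g ∣ k} = d / g := by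
    apply le_antisymm
    · exact Nat.sInf_le ⟨hdg0, dvd_rfl⟩
    · obtain ⟨h1, h2⟩ := Nat.sInf_mem (⟨d / g, hdg0, dvd_rfl⟩ :
        {k : ℕ | 0 < k ∧ d / g ∣ k}.Nonempty)
      exact Nat.le_of_dvd h1 h2
  rw [hS'eq, hinf]
  constructor
  · intro h
    have h1 : d / g * g = d := Nat.div_mul_cancel (Nat.gcd_dvd_left _ _)
    rw [← h] at h1
    have h2 : d * g = d * 1 := by rw [mul_one]; exact h1
    have h3 : g = 1 := Nat.eq_of_mul_eq_mul_left hd0 h2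
    exact h3
  · intro h
    have h3 : g = 1 := h
    rw [h3, Nat.div_one]
end

section
/- Let n > 2, let (G,f) be an n-ary group, and let x ∈ G have finite n-ary order ord_n(x). Then the skew element x̄ is idempotent, i.e. ord_n(x̄) = 1 (equivalently f(x̄,…,x̄) = x̄), if and only if ord_n(x) is a divisor of n−2. -/
private lemma pw_head {G : Type*} (n : ℕ) (hn : 2 < n) (f : (Fin n → G) → G)
    (hassoc : IsNAssoc n f) (x : G) :
    ∀ a : ℕ, f (fun m : Fin n => if (m : ℕ) = 0 then nPow n f x a else x)
      = nPow n f x (a + 1) := by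
  intro a
  induction a with
  | zero =>
    simp only [nPow]
    exact congrArg f (funext fun j => by split <;> (try split) <;> rfl)
  | succ a ih =>
    have h := hassoc 0 (n-1) (by omega) (by omega)
      (fun t => if t = n - 1 then nPow n f x a else x)
    unfold applyAt at h
    simp only [] at h
    refine Eq.trans ?_ (h.trans ?_)
    · apply congrArg f; funext j
      rcases eq_or_ne (j : ℕ) 0 with h0 | h0
      · rw [if_pos h0, if_neg (by omega), if_pos h0]
        simp only [Nat.zero_add, nPow]
      · rw [if_neg h0, if_neg (by omega), if_neg h0,
          if_neg (by omega : ¬ ((j:ℕ) + n - 1 = n - 1))]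
    · have e1 : (f fun t : Fin n => if n - 1 + (t : ℕ) = n - 1 then nPow n f x a else x)
          = nPow n f x (a + 1) := by
        rw [← ih]
        exact congrArg f (funext fun t => by
          rcases eq_or_ne (t : ℕ) 0 with h2 | h2
          · rw [if_pos (by omega), if_pos h2]
          · rw [if_neg (by omega), if_neg h2])
      refine Eq.trans (congrArg f (funext fun j => ?_))
        (?_ : f (fun m : Fin n => if (m : ℕ) = n - 1 then nPow n f x (a + 1) else x) = _)
      · have hj := j.isLt
        rcases Nat.lt_or_ge (j : ℕ) (n - 1) with h0 | h0
        · rw [if_pos h0, if_neg (by omega), if_neg (by omega)]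
        · have h1 : (j : ℕ) = n - 1 := by omega
          rw [if_neg (by omega), if_pos h1, if_pos h1, e1]
      · simp only [nPow]

private lemma collapse {G : Type*} (n : ℕ) (hn : 2 < n) (f : (Fin n → G) → G)
    (hassoc : IsNAssoc n f) (x : G) (i : ℕ) (hi1 : 1 ≤ i) (hi2 : i ≤ n - 1) :
    ∀ (b a : ℕ) (w : ℕ → G),
      f (fun m : Fin n => if (m : ℕ) = 0 then nPow n f x a else if (m : ℕ) < i then x
          else if (m : ℕ) = i then nPow n f x b else w (m : ℕ))
      = f (fun m : Fin n => if (m : ℕ) = 0 then nPow n f x (a + b) else if (m : ℕ) ≤ i then x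
          else w (m : ℕ)) := by
  intro b
  induction b with
  | zero =>
    intro a w
    apply congrArg f; funext j
    rcases eq_or_ne (j : ℕ) 0 with h0 | h0
    · rw [if_pos h0, if_pos h0, Nat.add_zero]
    · rw [if_neg h0, if_neg h0]
      rcases Nat.lt_or_ge (j : ℕ) i with h1 | h1
      · rw [if_pos h1, if_pos (by omega)]
      · rcases eq_or_ne (j : ℕ) i with h2 | h2
        · rw [if_neg (by omega), if_pos h2, if_pos (by omega)]
          rfl
        · rw [if_neg (by omega), if_neg h2, if_neg (by omega)]
  | succ b ih =>
    intro a w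
    have h := hassoc 0 i (by omega) (by omega)
      (fun t => if t = 0 then nPow n f x a else if t = i + n - 1 then nPow n f x b
        else if i + n - 1 < t then w (t - (n - 1)) else x)
    unfold applyAt at h
    simp only [] at h
    -- h : applyAt0 = applyAtI.  goal LHS(b+1) = applyAtI, applyAt0 = via ih → RHS
    refine Eq.trans ?_ ((h.symm).trans ?_)
    · -- goal LHS(b+1) = applyAt at i
      apply congrArg f; funext j
      have hj := j.isLt
      rcases eq_or_ne (j : ℕ) 0 with h0 | h0
      · rw [if_pos h0, if_pos (by omega), if_pos h0]
      · rcases Nat.lt_or_ge (j : ℕ) i with h1 | h1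
        · rw [if_neg h0, if_pos h1, if_pos h1, if_neg h0, if_neg (by omega), if_neg (by omega)]
        · rcases eq_or_ne (j : ℕ) i with h2 | h2
          · rw [if_neg h0, if_neg (by omega), if_pos h2, if_neg (by omega), if_pos h2]
            -- nPow (b+1) = f (inner block at i)
            simp only [nPow]
            apply congrArg f; funext t
            rcases eq_or_ne (t : ℕ) (n - 1) with h3 | h3
            · rw [if_pos h3, if_neg (by omega), if_pos (by omega)]
            · have ht := t.isLt
              rw [if_neg h3, if_neg (by omega), if_neg (by omega), if_neg (by omega)]
          · rw [if_neg h0, if_neg (by omega), if_neg h2, if_neg (by omega), if_neg h2,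
              if_neg (by omega), if_neg (by omega), if_pos (by omega)]
            congr 1
            omega
    · -- goal : applyAt at 0 = RHS
      have e1 : (f fun t : Fin n => if (0 + (t : ℕ)) = 0 then nPow n f x a
            else if (0 + (t : ℕ)) = i + n - 1 then nPow n f x b
            else if i + n - 1 < 0 + (t : ℕ) then w (0 + (t : ℕ) - (n - 1)) else x)
          = nPow n f x (a + 1) := by
        rw [← pw_head n hn f hassoc x a]
        apply congrArg f; funext t
        have ht := t.isLt
        rcases eq_or_ne (t : ℕ) 0 with h2 | h2
        · rw [if_pos (by omega), if_pos h2]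
        · rw [if_neg (by omega), if_neg (by omega), if_neg (by omega), if_neg h2]
      refine Eq.trans (congrArg f (funext fun j => ?_)) ((ih (a + 1) w).trans ?_)
      · -- applyAt0 entry j = LHS-of-ih entry j  (a+1, b, w)
        have hj := j.isLt
        rcases eq_or_ne (j : ℕ) 0 with h0 | h0
        · rw [if_neg (by omega), if_pos h0, if_pos h0]
          exact e1
        · rcases Nat.lt_or_ge (j : ℕ) i with h1 | h1
          · rw [if_neg (by omega), if_neg h0, if_neg (by omega), if_neg (by omega),
              if_neg (by omega), if_neg h0, if_pos h1]
          · rcases eq_or_ne (j : ℕ) i with h2 | h2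
            · rw [if_neg (by omega), if_neg h0, if_neg (by omega), if_pos (by omega),
                if_neg h0, if_neg (by omega), if_pos h2]
            · rw [if_neg (by omega), if_neg h0, if_neg (by omega), if_neg (by omega),
                if_pos (by omega), if_neg h0, if_neg (by omega), if_neg h2]
              congr 1
              omega
      · -- f(if 0 then pw (a+1+b) ...) = f(if 0 then pw (a+(b+1)) ...)
        apply congrArg f; funext j
        rcases eq_or_ne (j : ℕ) 0 with h0 | h0
        · rw [if_pos h0, if_pos h0]
          congr 1
          omega
        · rw [if_neg h0, if_neg h0]

private lemma pw_all {G : Type*} (n : ℕ) (hn : 2 < n) (f : (Fin n → G) → G)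
    (hassoc : IsNAssoc n f) (x : G) (k : ℕ) :
    f (fun _ : Fin n => nPow n f x k) = nPow n f x (n * k + 1) := by
  have main : ∀ m, m ≤ n - 1 →
      f (fun _ : Fin n => nPow n f x k)
        = f (fun j : Fin n => if (j : ℕ) = 0 then nPow n f x (k + m * k)
            else if (j : ℕ) ≤ m then x else nPow n f x k) := by
    intro m
    induction m with
    | zero =>
      intro _
      apply congrArg f; funext j
      rcases eq_or_ne (j : ℕ) 0 with h0 | h0
      · rw [if_pos h0]
        congr 1
        omega
      · rw [if_neg h0, if_neg (by omega)]
    | succ m ih =>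
      intro hm
      rw [ih (by omega)]
      have h := collapse n hn f hassoc x (m + 1) (by omega) (by omega) k (k + m * k)
        (fun _ => nPow n f x k)
      refine Eq.trans (congrArg f (funext fun j => ?_)) (h.trans ?_)
      · rcases eq_or_ne (j : ℕ) 0 with h0 | h0
        · rw [if_pos h0, if_pos h0]
        · rw [if_neg h0, if_neg h0]
          rcases Nat.lt_or_ge (j : ℕ) (m + 1) with h1 | h1
          · rw [if_pos (by omega), if_pos h1]
          · rcases eq_or_ne (j : ℕ) (m + 1) with h2 | h2
            · rw [if_neg (by omega), if_neg (by omega), if_pos h2]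
            · rw [if_neg (by omega), if_neg (by omega), if_neg h2]
      · apply congrArg f; funext j
        rcases eq_or_ne (j : ℕ) 0 with h0 | h0
        · rw [if_pos h0, if_pos h0]
          congr 1
          ring
        · rw [if_neg h0, if_neg h0]
  rw [main (n - 1) le_rfl]
  have e2 : k + (n - 1) * k = n * k := by
    obtain ⟨m, rfl⟩ : ∃ m, n = m + 1 := ⟨n - 1, by omega⟩
    simp [Nat.add_mul, Nat.succ_mul]
    ring
  rw [e2, ← pw_head n hn f hassoc x (n * k)]
  apply congrArg f; funext j
  rcases eq_or_ne (j : ℕ) 0 with h0 | h0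
  · rw [if_pos h0, if_pos h0]
  · rw [if_neg h0, if_neg h0, if_pos (by have := j.isLt; omega)]

/-- I.M. Dudek–W.A. Dudek, 1981.
If `x` has finite `n`-ary order, then the skew element `x̄` is idempotent
(`ord_n(x̄) = 1`) iff `ord_n(x)` divides `n-2`. -/
theorem skew_idempotent_iff_order_dvd {G : Type*} (n : ℕ) (hn : 2 < n)
    (f : (Fin n → G) → G) (hG : IsNAryGroup n f)
    (bar : G → G) (hbar : IsSkewOf n f bar) (x : G)
    (hfin : ∃ k : ℕ, 0 < k ∧ nPow n f x k = x) :
    sInf {k : ℕ | 0 < k ∧ nPow n f (bar x) k = bar x} = 1 ↔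
      sInf {k : ℕ | 0 < k ∧ nPow n f x k = x} ∣ (n - 2) := by
  obtain ⟨hassoc, husolv⟩ := hG
  have hne : {k : ℕ | 0 < k ∧ nPow n f x k = x}.Nonempty := hfin
  obtain ⟨d, hdd⟩ : ∃ d, sInf {k : ℕ | 0 < k ∧ nPow n f x k = x} = d := ⟨_, rfl⟩
  rw [hdd]
  have hdmem := Nat.sInf_mem hne
  rw [hdd] at hdmem
  obtain ⟨hdpos, hdx⟩ := hdmem
  -- the translation map
  set L : G → G := fun z => f (fun m : Fin n => if (m : ℕ) = n - 1 then z else x) with hL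
  have hLpw : ∀ k, nPow n f x k = L^[k] x := by
    intro k
    induction k with
    | zero => rfl
    | succ k ih => rw [Function.iterate_succ_apply', ← ih]; rfl
  have hLinj : Function.Injective L := by
    intro z₁ z₂ hz
    obtain ⟨v, hv, huniq⟩ := husolv (n - 1) (by omega) (fun _ => x) (L z₁)
    have h1 : f (fun m : Fin n => if (m : ℕ) = n - 1 then z₁ else (fun _ => x) m) = L z₁ := rfl
    have h2' : f (fun m : Fin n => if (m : ℕ) = n - 1 then z₂ else (fun _ => x) m) = L z₂ :=
      rfl
    have h2 : f (fun m : Fin n => if (m : ℕ) = n - 1 then z₂ else (fun _ => x) m) = L z₁ :=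
      h2'.trans hz.symm
    exact (huniq z₁ h1).trans (huniq z₂ h2).symm
  have pw_add_d : ∀ a, nPow n f x (a + d) = nPow n f x a := by
    intro a
    rw [hLpw, hLpw, Function.iterate_add_apply, ← hLpw d, hdx]
  have pw_add_mul : ∀ r q, nPow n f x (r + d * q) = nPow n f x r := by
    intro r q
    induction q with
    | zero => rw [Nat.mul_zero, Nat.add_zero]
    | succ q ih =>
      rw [show r + d * (q + 1) = (r + d * q) + d by ring, pw_add_d, ih]
  have pw_mod : ∀ a, nPow n f x a = nPow n f x (a % d) := by
    intro a
    conv_lhs => rw [← Nat.mod_add_div a d]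
    exact pw_add_mul _ _
  have pw_eq_x_iff : ∀ a, nPow n f x a = x ↔ d ∣ a := by
    intro a
    constructor
    · intro h
      by_contra hnd
      have hmod : a % d ≠ 0 := fun h0 => hnd (Nat.dvd_of_mod_eq_zero h0)
      have h1 : a % d ∈ {k : ℕ | 0 < k ∧ nPow n f x k = x} :=
        ⟨Nat.pos_of_ne_zero hmod, by rw [← pw_mod]; exact h⟩
      have h2 := Nat.sInf_le h1
      rw [hdd] at h2
      have h3 := Nat.mod_lt a hdpos
      omega
    · rintro ⟨q, rfl⟩
      rw [show d * q = 0 + d * q by omega, pw_add_mul]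
      rfl
  have pw_eq_pw_iff : ∀ a c, nPow n f x (a + c) = nPow n f x a ↔ d ∣ c := by
    intro a c
    rw [hLpw, hLpw, Function.iterate_add_apply]
    constructor
    · intro h
      have := (hLinj.iterate a) h
      rw [← hLpw] at this
      exact (pw_eq_x_iff c).mp this
    · intro h
      have : nPow n f x c = x := (pw_eq_x_iff c).mpr h
      rw [hLpw] at this
      rw [this]
  -- skew element is the (d-1)-st power
  have hbarx : bar x = nPow n f x (d - 1) := by
    obtain ⟨v, hv, huniq⟩ := husolv (n - 1) (by omega) (fun _ => x) x
    have h1 : f (fun m : Fin n => if (m : ℕ) = n - 1 then bar x else (fun _ => x) m) = x :=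
      hbar x
    have h2 : f (fun m : Fin n => if (m : ℕ) = n - 1 then nPow n f x (d - 1)
        else (fun _ => x) m) = x := by
      have h3 : nPow n f x ((d - 1) + 1) = x := by
        rw [show d - 1 + 1 = d by omega]; exact hdx
      exact h3
    exact (huniq _ h1).trans (huniq _ h2).symm
  -- the key computation
  have key : nPow n f (bar x) 1 = nPow n f x (n * (d - 1) + 1) := by
    have e0 : nPow n f (bar x) 1 = f (fun _ : Fin n => bar x) := by
      show f (fun m : Fin n => if (m : ℕ) = n - 1 then nPow n f (bar x) 0 else bar x) = _
      exact congrArg f (funext fun m => by split <;> rfl)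
    rw [e0, hbarx, pw_all n hn f hassoc x (d - 1)]
  have cond : (nPow n f (bar x) 1 = bar x) ↔ d ∣ (n - 2) := by
    rw [key, hbarx]
    have harith : n * (d - 1) + 1 = (d - 1) + ((n - 1) * (d - 1) + 1) := by
      obtain ⟨e, rfl⟩ : ∃ e, d = e + 1 := ⟨d - 1, by omega⟩
      obtain ⟨m, rfl⟩ : ∃ m, n = m + 3 := ⟨n - 3, by omega⟩
      simp only [Nat.add_sub_cancel, show m + 3 - 1 = m + 2 by omega,
        show m + 3 - 2 = m + 1 by omega]
      ring
    rw [harith, pw_eq_pw_iff (d - 1) ((n - 1) * (d - 1) + 1)]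
    have hP : ((n - 1) * (d - 1) + 1) + (n - 2) = (n - 1) * d := by
      obtain ⟨e, rfl⟩ : ∃ e, d = e + 1 := ⟨d - 1, by omega⟩
      obtain ⟨m, rfl⟩ : ∃ m, n = m + 3 := ⟨n - 3, by omega⟩
      simp only [Nat.add_sub_cancel, show m + 3 - 1 = m + 2 by omega,
        show m + 3 - 2 = m + 1 by omega]
      ring
    have hPd : d ∣ ((n - 1) * (d - 1) + 1) + (n - 2) := by
      rw [hP]; exact dvd_mul_left d (n - 1)
    constructor
    · intro h
      have := Nat.dvd_sub hPd h
      rwa [show ((n - 1) * (d - 1) + 1) + (n - 2) - ((n - 1) * (d - 1) + 1) = n - 2 by omega]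
        at this
    · intro h
      have := Nat.dvd_sub hPd h
      rwa [show ((n - 1) * (d - 1) + 1) + (n - 2) - (n - 2) = (n - 1) * (d - 1) + 1 by omega]
        at this
  constructor
  · intro h1
    have hne2 : {k : ℕ | 0 < k ∧ nPow n f (bar x) k = bar x}.Nonempty := by
      by_contra hemp
      rw [Set.not_nonempty_iff_eq_empty] at hemp
      rw [hemp, Nat.sInf_empty] at h1
      exact one_ne_zero h1.symm
    have hmem := Nat.sInf_mem hne2
    rw [h1] at hmem
    exact cond.mp hmem.2
  · intro h2
    have hmem : 1 ∈ {k : ℕ | 0 < k ∧ nPow n f (bar x) k = bar x} :=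
      ⟨Nat.one_pos, cond.mpr h2⟩
    have hle := Nat.sInf_le hmem
    have hpos := (Nat.sInf_mem ⟨1, hmem⟩).1
    omega
end

section
/- Let n > 2. Every n-ary group ⟨φ,b⟩-derived from the infinite cyclic group (ℤ,+) is isomorphic either to the n-ary group (ℤ, f_a) for some integer a with 0 ≤ a ≤ n−2, where f_a(x_1,…,x_n) = x_1 + x_2 + … + x_n + a, or, when n is odd, to the n-ary group (ℤ, g_{−1}), where g_{−1}(x_1,…,x_n) = x_1 − x_2 + x_3 − x_4 + … + x_n. -/
/-- Dudek–Głazek, 2006.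
Every `n`-ary group `⟨φ,b⟩`-derived from `(ℤ,+)` is isomorphic to `(ℤ, f_a)` for some
`0 ≤ a ≤ n-2`, or, when `n` is odd, to `(ℤ, g₋₁)`. -/
theorem nary_group_on_int_classification (n : ℕ) (hn : 2 < n)
    (φ : ℤ → ℤ) (b : ℤ)
    (hφbij : Function.Bijective φ) (hφadd : ∀ x y : ℤ, φ (x + y) = φ x + φ y)
    (hφb : φ b = b) (hφn : ∀ x : ℤ, φ^[n - 1] x = b + x - b)
    (f : (Fin n → ℤ) → ℤ)
    (hf : ∀ x : Fin n → ℤ, f x = (∑ j : Fin n, φ^[(j : ℕ)] (x j)) + b) :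
    (∃ a : ℕ, a ≤ n - 2 ∧ ∃ h : ℤ → ℤ, Function.Bijective h ∧
      ∀ x : Fin n → ℤ, h (f x) = (∑ j : Fin n, h (x j)) + (a : ℤ)) ∨
    (Odd n ∧ ∃ h : ℤ → ℤ, Function.Bijective h ∧
      ∀ x : Fin n → ℤ, h (f x) = ∑ j : Fin n, (-1 : ℤ) ^ (j : ℕ) * h (x j)) := by
  
  -- φ is multiplication by φ 1
  have key : ∀ x : ℤ, φ x = φ 1 * x := by
    intro x
    have h := map_zsmul (AddMonoidHom.mk' φ hφadd) x (1 : ℤ)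
    simpa [zsmul_eq_mul, mul_comm] using h
  have hc : φ 1 = 1 ∨ φ 1 = -1 := by
    obtain ⟨y, hy⟩ := hφbij.2 1
    rw [key] at hy
    exact Int.isUnit_iff.mp (IsUnit.of_mul_eq_one _ hy)
  have hiter : ∀ (j : ℕ) (x : ℤ), φ^[j] x = (φ 1) ^ j * x := by
    intro j
    induction j with
    | zero => simp
    | succ k ih =>
      intro x
      rw [Function.iterate_succ_apply', ih, key, pow_succ]
      ring
  rcases hc with hc | hc
  · -- φ = id case
    left
    have m0 : (0 : ℤ) < (n : ℤ) - 1 := by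
      have : (2 : ℤ) < (n : ℤ) := by exact_mod_cast hn
      linarith
    set m : ℤ := (n : ℤ) - 1 with hm
    set a : ℤ := b % m with ha
    set t : ℤ := (b - a) / m with ht
    have hmt : m * t = b - a := by
      rw [ht]
      exact Int.mul_ediv_cancel' (Int.dvd_self_sub_of_emod_eq rfl)
    have ha0 : 0 ≤ a := Int.emod_nonneg b (by linarith)
    have halt : a < m := Int.emod_lt_of_pos b m0
    refine ⟨a.toNat, ?_, fun x => x + t, ?_, ?_⟩
    · have : (a.toNat : ℤ) ≤ (n : ℤ) - 2 := by
        rw [Int.toNat_of_nonneg ha0]; linarith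
      omega
    · constructor
      · intro x y hxy; simpa using hxy
      · intro y; exact ⟨y - t, by ring⟩
    · intro x
      rw [hf]
      have : ∀ j : Fin n, φ^[(j : ℕ)] (x j) = x j := by
        intro j; rw [hiter, hc, one_pow, one_mul]
      simp only [this]
      rw [Finset.sum_add_distrib]
      have hcard : ∑ _j : Fin n, t = (n : ℤ) * t := by
        rw [Finset.sum_const]
        simp [mul_comm]
      rw [hcard, Int.toNat_of_nonneg ha0]
      have : b = m * t + a := by rw [hmt]; ring
      rw [this, hm]
      ring
  · -- φ = neg case
    right
    have hb0 : b = 0 := by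
      have := hφb
      rw [key, hc] at this
      linarith
    have hodd : Odd n := by
      rcases Nat.even_or_odd n with he | ho
      · exfalso
        have h1 := hφn 1
        rw [hiter, hc, hb0] at h1
        have hno : Odd (n - 1) := Nat.Even.sub_odd (by omega) he odd_one
        rw [hno.neg_one_pow] at h1
        simp at h1
      · exact ho
    refine ⟨hodd, id, Function.bijective_id, ?_⟩
    intro x
    rw [hf, hb0]
    simp only [id]
    rw [add_zero]
    congr 1
    ext j
    rw [hiter, hc]
end

section
/- Let n > 2, let (G,f) be an n-ary group, let V be a complex vector space, and let Π^L be a left bi-element representation of (G,f) in V. Then Π^L is uniquely determined by two elements: for all a_1,…,a_{n−1} ∈ G and every b ∈ G there exists c ∈ G such that Π^L(a_1,…,a_{n−1}) = Π^L(b,…,b,c) (with n−2 copies of b). -/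
/-- cf. Borowiec–Dudek–Duplij.
A left bi-element representation of an `n`-ary group is determined by two elements:
`Π^L(a₁,…,a_{n-1}) = Π^L(b,…,b,c)` for some `c`. -/
theorem left_birepresentation_two_elements {G : Type*} (n : ℕ) (hn : 2 < n)
    (f : (Fin n → G) → G) (hG : IsNAryGroup n f)
    (bar : G → G) (hbar : IsSkewOf n f bar)
    (V : Type*) [AddCommGroup V] [Module ℂ V]
    (P : (Fin (n - 1) → G) → Module.End ℂ V)
    (hcomp : ∀ a b : Fin (n - 1) → G,
      P a * P b = P (fun m => if (m : ℕ) = 0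
        then f (fun i => if h : (i : ℕ) < n - 1 then a ⟨(i : ℕ), h⟩ else b ⟨0, by omega⟩)
        else b m))
    (hid : ∀ a : G, P (fun m => if (m : ℕ) = n - 2 then bar a else a) = 1) :
    ∀ (a : Fin (n - 1) → G) (b : G), ∃ c : G,
      P a = P (fun m => if (m : ℕ) = n - 2 then c else b) := by
  intro a b
  set v : Fin (n - 1) → G := fun m => if (m : ℕ) = n - 2 then bar b else b with hv
  have hPv : P v = 1 := hid b
  have hv0 : v ⟨0, by omega⟩ = b := by
    simp only [hv]
    have : (0 : ℕ) ≠ n - 2 := by omega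
    simp [this]
  set D : G := f (fun i => if h : (i : ℕ) < n - 1 then a ⟨(i : ℕ), h⟩ else b) with hD
  obtain ⟨c, hc, -⟩ := (hG.2 (n - 2) (by omega)) (fun _ => b) D
  refine ⟨c, ?_⟩
  set cvec : Fin (n - 1) → G := fun m => if (m : ℕ) = n - 2 then c else b with hcvec
  have h1 : P a * P v = P (fun m => if (m : ℕ) = 0 then D else v m) := by
    rw [hcomp a v]
    congr 1
    funext m
    by_cases hm : (m : ℕ) = 0
    · simp only [hm, if_true, hD, hv0]
    · simp [hm]
  have h2 : P cvec * P v = P (fun m => if (m : ℕ) = 0 then D else v m) := by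
    rw [hcomp cvec v]
    congr 1
    funext m
    by_cases hm : (m : ℕ) = 0
    · simp only [hm, if_true]
      rw [← hc]
      congr 1
      funext i
      by_cases h : (i : ℕ) < n - 1
      · simp [h, hcvec]
      · have h1' : (i : ℕ) ≠ n - 2 := by omega
        have h2' : (0 : ℕ) ≠ n - 2 := by omega
        simp [h, h1', hv, h2']
    · simp [hm]
  have := h1.trans h2.symm
  rw [hPv, mul_one, mul_one] at this
  exact this
end
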